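/- arXiv:2107.12596 — 5 statements merged into one kernel-verified Lean document; each statement's English description precedes it below -/
import Mathlib

section
/- Under the communication setup and the backward controller recursion with horizon M, suppose the multi-input system state evolves as x_{k+1} = A_k x_k + Σ_{i=1}^N B_{k,i} u_{k,i} and each agent's virtual state evolves as x_{k+1,i} = Σ_{j∈𝒩̄_i} ω_ji P̄_{k+1,i}^{-1} P_{k+1,j} A_k x_{k,j} + B_{k,i} u_{k,i}, where the inputs u_{k,i} ∈ ℝ^{m_i} are arbitrary and shared between the two systems, and the virtual states are initialized as x_{0,i} = x_0/N for every i. Then x_k = Σ_{i=1}^N x_{k,i} for all k = 0, 1, …, M. -/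
open Matrix Finset

private lemma smul_posDef {k : ℕ} {c : ℝ} (hc : 0 < c) {M : Matrix (Fin k) (Fin k) ℝ}
    (hM : M.PosDef) : (c • M).PosDef := by
  refine ⟨?_, fun x hx => ?_⟩
  · unfold Matrix.IsHermitian
    rw [conjTranspose_smul, hM.isHermitian.eq]
    simp
  · exact (hM.smul hc).2 hx

private lemma posSemidef_sum {k : ℕ} {ι : Type*} (s : Finset ι)
    (f : ι → Matrix (Fin k) (Fin k) ℝ) (hf : ∀ i ∈ s, (f i).PosSemidef) :
    (∑ i ∈ s, f i).PosSemidef := by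
  classical
  induction s using Finset.induction with
  | empty => simpa using Matrix.PosSemidef.zero
  | insert _ _ h ih =>
    rw [Finset.sum_insert h]
    exact ((hf _ (Finset.mem_insert_self _ _)).add
      (ih fun i hi => hf i (Finset.mem_insert_of_mem hi)))

private lemma mulVec_sum' {k : ℕ} {ι : Type*} (s : Finset ι) (M : Matrix (Fin k) (Fin k) ℝ)
    (f : ι → Fin k → ℝ) : M *ᵥ (∑ i ∈ s, f i) = ∑ i ∈ s, M *ᵥ f i := by
  classical
  induction s using Finset.induction with
  | empty => simp
  | insert _ _ h ih => simp [Finset.sum_insert h, Matrix.mulVec_add, ih]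

private lemma sum_mulVec {k : ℕ} {ι : Type*} (s : Finset ι)
    (f : ι → Matrix (Fin k) (Fin k) ℝ) (v : Fin k → ℝ) :
    (∑ i ∈ s, f i) *ᵥ v = ∑ i ∈ s, f i *ᵥ v := by
  classical
  induction s using Finset.induction with
  | empty => simp
  | insert _ _ h ih => simp [Finset.sum_insert h, Matrix.add_mulVec, ih]

theorem stmt5 {n N : ℕ} (hN : 0 < N) (m : Fin N → ℕ)
    (nbr : Fin N → Finset (Fin N)) (hself : ∀ i, i ∈ nbr i)
    (ω : Fin N → Fin N → ℝ)
    (hω : ∀ i, ∀ j ∈ nbr i, 0 < ω i j ∧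
      ω i j ≤ 1 / ((Finset.univ.filter (fun l => j ∈ nbr l)).card : ℝ))
    (M : ℕ)
    (A : ℕ → Matrix (Fin n) (Fin n) ℝ)
    (B : ∀ _ : ℕ, ∀ i : Fin N, Matrix (Fin n) (Fin (m i)) ℝ)
    (Q : ℕ → Matrix (Fin n) (Fin n) ℝ) (hQ : ∀ k, (Q k).PosDef)
    (R : ∀ _ : ℕ, ∀ i : Fin N, Matrix (Fin (m i)) (Fin (m i)) ℝ)
    (hR : ∀ k i, (R k i).PosDef)
    (Pbar Pm Pbrv : ℕ → Fin N → Matrix (Fin n) (Fin n) ℝ)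
    (hPbrvM : ∀ i, Pbrv M i = (N : ℝ) • Q M)
    (hPbar : ∀ k < M, ∀ i,
      Pbar (k+1) i = ((Pbrv (k+1) i)⁻¹ + B k i * (R k i)⁻¹ * (B k i)ᵀ)⁻¹)
    (hPm : ∀ k < M, ∀ i, Pm (k+1) i = (∑ j ∈ nbr i, ω i j • (Pbar (k+1) j)⁻¹)⁻¹)
    (hPbrv : ∀ k < M, ∀ i, Pbrv k i = (A k)ᵀ * Pm (k+1) i * A k + (N : ℝ) • Q k)
    (x : ℕ → Fin n → ℝ) (xv : ℕ → Fin N → Fin n → ℝ)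
    (u : ∀ _ : ℕ, ∀ i : Fin N, Fin (m i) → ℝ)
    (hx : ∀ k < M, x (k+1) = A k *ᵥ x k + ∑ i, B k i *ᵥ u k i)
    (hxv0 : ∀ i, xv 0 i = (N : ℝ)⁻¹ • x 0)
    (hxv : ∀ k < M, ∀ i, xv (k+1) i =
      (∑ j ∈ Finset.univ.filter (fun j => i ∈ nbr j),
        ω j i • ((Pbar (k+1) i)⁻¹ *ᵥ (Pm (k+1) j *ᵥ (A k *ᵥ xv k j))))
      + B k i *ᵥ u k i) :
    ∀ k ≤ M, x k = ∑ i, xv k i := by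
  have hNR : (0 : ℝ) < (N : ℝ) := Nat.cast_pos.mpr hN
  -- Posdef of Pbrv, by backward induction
  have hPbrvPD : ∀ d k, M - k = d → k ≤ M → ∀ i, (Pbrv k i).PosDef := by
    intro d
    induction d with
    | zero =>
      intro k hd hk
      have : k = M := le_antisymm hk (Nat.le_of_sub_eq_zero hd)
      subst this
      intro i
      rw [hPbrvM i]
      exact smul_posDef hNR (hQ _)
    | succ d ih =>
      intro k hd hk
      have hkM : k < M := by omega
      have hPbrvS : ∀ i, (Pbrv (k+1) i).PosDef := ih (k+1) (by omega) hkM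
      intro i
      rw [hPbrv k hkM i]
      refine Matrix.PosDef.posSemidef_add ?_ (smul_posDef hNR (hQ k))
      have hPbarPD : ∀ j, (Pbar (k+1) j).PosDef := by
        intro j
        rw [hPbar k hkM j]
        exact ((hPbrvS j).inv.add_posSemidef
          ((hR k j).inv.posSemidef.mul_mul_conjTranspose_same (B k j))).inv
      have hSPD : (∑ j ∈ nbr i, ω i j • (Pbar (k+1) j)⁻¹).PosDef := by
        rw [← Finset.add_sum_erase _ _ (hself i)]
        refine Matrix.PosDef.add_posSemidef
          (smul_posDef (hω i i (hself i)).1 (hPbarPD i).inv) ?_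
        exact posSemidef_sum _ _ fun j hj =>
          (smul_posDef (hω i j (Finset.mem_of_mem_erase hj)).1
            (hPbarPD j).inv).posSemidef
      rw [hPm k hkM i]
      simpa using (hSPD.inv.posSemidef.mul_mul_conjTranspose_same (A k)ᵀ)
  -- Key identity
  have hPmInv : ∀ k < M, ∀ j (v : Fin n → ℝ),
      ∑ i ∈ nbr j, ω j i • ((Pbar (k+1) i)⁻¹ *ᵥ (Pm (k+1) j *ᵥ v)) = v := by
    intro k hk j v
    have hPbrvS : ∀ i, (Pbrv (k+1) i).PosDef := hPbrvPD (M-(k+1)) (k+1) rfl hk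
    have hPbarPD : ∀ i, (Pbar (k+1) i).PosDef := by
      intro i
      rw [hPbar k hk i]
      exact ((hPbrvS i).inv.add_posSemidef
        ((hR k i).inv.posSemidef.mul_mul_conjTranspose_same (B k i))).inv
    have hSPD : (∑ i ∈ nbr j, ω j i • (Pbar (k+1) i)⁻¹).PosDef := by
      rw [← Finset.add_sum_erase _ _ (hself j)]
      refine Matrix.PosDef.add_posSemidef
        (smul_posDef (hω j j (hself j)).1 (hPbarPD j).inv) ?_
      exact posSemidef_sum _ _ fun i hi =>
        (smul_posDef (hω j i (Finset.mem_of_mem_erase hi)).1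
          (hPbarPD i).inv).posSemidef
    calc ∑ i ∈ nbr j, ω j i • ((Pbar (k+1) i)⁻¹ *ᵥ (Pm (k+1) j *ᵥ v))
        = (∑ i ∈ nbr j, ω j i • (Pbar (k+1) i)⁻¹) *ᵥ (Pm (k+1) j *ᵥ v) := by
          rw [sum_mulVec]
          exact Finset.sum_congr rfl fun i _ => by rw [smul_mulVec]
      _ = v := by
          rw [hPm k hk j, mulVec_mulVec,
            Matrix.mul_nonsing_inv _ (Matrix.isUnit_iff_isUnit_det _ |>.1 hSPD.isUnit),
            one_mulVec]
  -- Main forward induction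
  intro k hk
  induction k with
  | zero =>
    simp only [hxv0, Finset.sum_const, Finset.card_univ, Fintype.card_fin]
    rw [← Nat.cast_smul_eq_nsmul ℝ, smul_smul, mul_inv_cancel₀ (ne_of_gt hNR), one_smul]
  | succ k ih =>
    have hkM : k < M := hk
    have ihk := ih (le_of_lt hkM)
    rw [hx k hkM]
    have : ∑ i, xv (k+1) i
        = (∑ i, ∑ j ∈ Finset.univ.filter (fun j => i ∈ nbr j),
            ω j i • ((Pbar (k+1) i)⁻¹ *ᵥ (Pm (k+1) j *ᵥ (A k *ᵥ xv k j))))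
          + ∑ i, B k i *ᵥ u k i := by
      rw [← Finset.sum_add_distrib]
      exact Finset.sum_congr rfl fun i _ => hxv k hkM i
    rw [this]
    congr 1
    symm
    rw [Finset.sum_comm' (s := Finset.univ) (t' := Finset.univ)
      (t := fun i => Finset.univ.filter (fun j => i ∈ nbr j))
      (s' := fun j => nbr j) (by simp)]
    calc ∑ j, ∑ i ∈ nbr j, ω j i • ((Pbar (k+1) i)⁻¹ *ᵥ (Pm (k+1) j *ᵥ (A k *ᵥ xv k j)))
        = ∑ j, A k *ᵥ xv k j := Finset.sum_congr rfl fun j _ => hPmInv k hkM j _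
      _ = A k *ᵥ ∑ j, xv k j := (mulVec_sum' _ _ _).symm
      _ = A k *ᵥ x k := by rw [← ihk]
end

section
/- Under the communication setup and the backward controller recursion with horizon M, suppose additionally that the Q_k, R_{k,i} are symmetric positive definite and, for every k ∈ {0,…,M−1} and i, assume the boundedness assumption (so all recursion matrices are well defined and positive definite). Then for every k ∈ {0,…,M−1} and every agent i, the smallest eigenvalue of P_{k+1,i} satisfies λ_min(P_{k+1,i}) ≥ (n_m/κ_{Q,1} + n_m N κ_B^2/κ_{R,1})^{-1}, where n_m = max_{i,j} ω_ij; equivalently P_{k+1,i}^{-1} ≤ (n_m/κ_{Q,1} + n_m N κ_B^2/κ_{R,1}) I_n. -/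
open Matrix Finset

set_option linter.unusedSectionVars false
set_option maxHeartbeats 1000000

section fusionHelpers
variable {ι : Type*} [Fintype ι] [DecidableEq ι]

private lemma qf_nonneg' {M : Matrix ι ι ℝ} (h : M.PosSemidef) (x : ι → ℝ) :
    0 ≤ x ⬝ᵥ (M *ᵥ x) := by simpa using h.dotProduct_mulVec_nonneg x

private lemma psd_of_qf' {M : Matrix ι ι ℝ} (h1 : M.IsHermitian)
    (h2 : ∀ x : ι → ℝ, 0 ≤ x ⬝ᵥ (M *ᵥ x)) : M.PosSemidef :=
  Matrix.PosSemidef.of_dotProduct_mulVec_nonneg h1 fun x => by simpa using h2 x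

private lemma herm_smul' {M : Matrix ι ι ℝ} (c : ℝ) (h : M.IsHermitian) :
    (c • M).IsHermitian := by
  rw [Matrix.IsHermitian, Matrix.conjTranspose_smul, h]; simp

private lemma psd_smul' {M : Matrix ι ι ℝ} {c : ℝ} (hc : 0 ≤ c) (h : M.PosSemidef) :
    (c • M).PosSemidef := by
  refine psd_of_qf' (herm_smul' c h.1) fun x => ?_
  rw [Matrix.smul_mulVec, dotProduct_smul]
  exact mul_nonneg hc (qf_nonneg' h x)

private lemma pd_smul' {M : Matrix ι ι ℝ} {c : ℝ} (hc : 0 < c) (h : M.PosDef) :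
    (c • M).PosDef := by
  refine Matrix.PosDef.of_dotProduct_mulVec_pos (herm_smul' c h.1) fun x hx => ?_
  rw [Matrix.smul_mulVec, dotProduct_smul]
  have := h.dotProduct_mulVec_pos hx
  simp only [star_trivial, RCLike.re_to_real] at this ⊢
  exact smul_pos hc (by simpa using this)

private lemma pd_smul_one' {c : ℝ} (hc : 0 < c) : (c • (1 : Matrix ι ι ℝ)).PosDef :=
  pd_smul' hc Matrix.PosDef.one

private lemma dot_self_nonneg' (x : ι → ℝ) : 0 ≤ x ⬝ᵥ x :=
  Finset.sum_nonneg fun i _ => mul_self_nonneg (x i)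

private lemma cauchy_dot' (x y : ι → ℝ) : (x ⬝ᵥ y) ^ 2 ≤ (x ⬝ᵥ x) * (y ⬝ᵥ y) := by
  have := Finset.sum_mul_sq_le_sq_mul_sq Finset.univ x y
  simpa [dotProduct, sq] using this

private lemma psd_sum' {α : Type*} (s : Finset α) (f : α → Matrix ι ι ℝ)
    (h : ∀ j ∈ s, (f j).PosSemidef) : (∑ j ∈ s, f j).PosSemidef :=
  Finset.sum_induction f _ (fun _ _ ha hb => ha.add hb) Matrix.PosSemidef.zero h

private lemma qf_sum' {α : Type*} (s : Finset α) (f : α → Matrix ι ι ℝ) (x : ι → ℝ) :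
    x ⬝ᵥ ((∑ j ∈ s, f j) *ᵥ x) = ∑ j ∈ s, x ⬝ᵥ (f j *ᵥ x) := by
  induction s using Finset.cons_induction with
  | empty => simp
  | cons a s ha ih => simp [Finset.sum_cons, Matrix.add_mulVec, ih]

/-- If `M ≥ c • 1` with `c > 0`, then `M` is positive definite and
`x ⬝ᵥ M⁻¹ x ≤ c⁻¹ ‖x‖²`. -/
private lemma inv_qf_bound' {M : Matrix ι ι ℝ} {c : ℝ} (hc : 0 < c)
    (h : (M - c • 1).PosSemidef) :
    M.PosDef ∧ ∀ x : ι → ℝ, x ⬝ᵥ (M⁻¹ *ᵥ x) ≤ c⁻¹ * (x ⬝ᵥ x) := by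
  have hM : M.PosDef := by
    have := Matrix.PosDef.posSemidef_add h (pd_smul_one' hc)
    rwa [sub_add_cancel] at this
  refine ⟨hM, fun x => ?_⟩
  set y := M⁻¹ *ᵥ x with hy
  have hdet : IsUnit M.det := isUnit_iff_ne_zero.2 hM.det_pos.ne'
  have hx : M *ᵥ y = x := by
    rw [hy, Matrix.mulVec_mulVec, Matrix.mul_nonsing_inv _ hdet, Matrix.one_mulVec]
  have ht : x ⬝ᵥ y = y ⬝ᵥ (M *ᵥ y) := by rw [← hx]; exact dotProduct_comm _ _
  have ht0 : 0 ≤ x ⬝ᵥ y := ht ▸ qf_nonneg' hM.posSemidef y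
  have h1 : c * (y ⬝ᵥ y) ≤ x ⬝ᵥ y := by
    have := qf_nonneg' h y
    rw [Matrix.sub_mulVec, dotProduct_sub, Matrix.smul_mulVec,
      Matrix.one_mulVec, dotProduct_smul, smul_eq_mul] at this
    rw [ht]; linarith [this]
  have hcs : (x ⬝ᵥ y) ^ 2 ≤ (x ⬝ᵥ x) * (y ⬝ᵥ y) := cauchy_dot' x y
  have hxx : 0 ≤ x ⬝ᵥ x := dot_self_nonneg' x
  rcases eq_or_lt_of_le ht0 with h0 | h0
  · rw [← h0]; positivity
  · rw [inv_eq_one_div, div_mul_eq_mul_div, le_div_iff₀ hc]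
    nlinarith [mul_le_mul_of_nonneg_left h1 hxx]

end fusionHelpers

private lemma euclidean_norm_sq' {s : ℕ} (u : Fin s → ℝ) :
    ‖(WithLp.equiv 2 (Fin s → ℝ)).symm u‖ ^ 2 = u ⬝ᵥ u := by
  rw [EuclideanSpace.norm_eq, Real.sq_sqrt (by positivity)]
  simp [dotProduct, sq, Real.norm_eq_abs, abs_mul_abs_self]

private lemma opnorm_mulVec' {q r : ℕ} {B : Matrix (Fin q) (Fin r) ℝ} {κ : ℝ}
    (hB : ‖LinearMap.toContinuousLinearMap (Matrix.toEuclideanLin B)‖ ≤ κ)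
    (v : Fin r → ℝ) : (B *ᵥ v) ⬝ᵥ (B *ᵥ v) ≤ κ ^ 2 * (v ⬝ᵥ v) := by
  set L := LinearMap.toContinuousLinearMap (Matrix.toEuclideanLin B) with hL
  have h1 : ‖L ((WithLp.equiv 2 (Fin r → ℝ)).symm v)‖ ≤
      κ * ‖(WithLp.equiv 2 (Fin r → ℝ)).symm v‖ := L.le_of_opNorm_le hB _
  have hLv : L ((WithLp.equiv 2 (Fin r → ℝ)).symm v)
      = (WithLp.equiv 2 (Fin q → ℝ)).symm (B *ᵥ v) := by
    rw [hL, LinearMap.coe_toContinuousLinearMap']; exact Matrix.toEuclideanLin_apply_piLp_toLp B v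
  rw [hLv] at h1
  have := mul_self_le_mul_self (norm_nonneg _) h1
  calc (B *ᵥ v) ⬝ᵥ (B *ᵥ v) = ‖(WithLp.equiv 2 (Fin q → ℝ)).symm (B *ᵥ v)‖ ^ 2 :=
        (euclidean_norm_sq' _).symm
    _ ≤ (κ * ‖(WithLp.equiv 2 (Fin r → ℝ)).symm v‖) ^ 2 := by rw [sq, sq]; exact this
    _ = κ ^ 2 * (v ⬝ᵥ v) := by rw [mul_pow, euclidean_norm_sq']

private lemma transpose_mulVec_dot_le' {q r : ℕ} {B : Matrix (Fin q) (Fin r) ℝ} {κ : ℝ}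
    (hB : ‖LinearMap.toContinuousLinearMap (Matrix.toEuclideanLin B)‖ ≤ κ)
    (x : Fin q → ℝ) : (Bᵀ *ᵥ x) ⬝ᵥ (Bᵀ *ᵥ x) ≤ κ ^ 2 * (x ⬝ᵥ x) := by
  set w := Bᵀ *ᵥ x with hw
  have ht : w ⬝ᵥ w = x ⬝ᵥ (B *ᵥ w) := by
    rw [Matrix.dotProduct_mulVec x B w, ← Matrix.mulVec_transpose]
  have hcs := cauchy_dot' x (B *ᵥ w)
  have hBw := opnorm_mulVec' hB w
  have hxx := dot_self_nonneg' x
  have ht0 := dot_self_nonneg' w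
  rcases eq_or_lt_of_le ht0 with h0 | h0
  · rw [← h0]; positivity
  · refine le_of_mul_le_mul_right ?_ h0
    nlinarith [ht, hcs, hBw, hxx]

/-- For symmetric matrices, `loewnerLE X Y` means `X ≤ Y` in the Loewner order. -/
def loewnerLE {p : ℕ} (X Y : Matrix (Fin p) (Fin p) ℝ) : Prop := (Y - X).PosSemidef

/-- First half of the proof of Theorem 1 of the paper: under the communication setup,
the backward controller recursion with horizon `M` and the (partial) boundedness
assumption, the fusion matrices `P_{k+1,i}` satisfy the uniform lower bound
`P_{k+1,i}⁻¹ ≤ (n_m/κ_{Q,1} + n_m N κ_B²/κ_{R,1}) I_n`, where `n_m = max_{i,j} ω_{ij}`. -/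
theorem fusion_matrix_uniform_lower_bound {n N : ℕ} (hN : 0 < N) (m : Fin N → ℕ)
    (nbr : Fin N → Finset (Fin N)) (hself : ∀ i, i ∈ nbr i)
    (ω : Fin N → Fin N → ℝ)
    (hω : ∀ i, ∀ j ∈ nbr i, 0 < ω i j ∧
      ω i j ≤ 1 / ((Finset.univ.filter (fun l => j ∈ nbr l)).card : ℝ))
    (M : ℕ)
    (A : ℕ → Matrix (Fin n) (Fin n) ℝ)
    (B : ∀ _ : ℕ, ∀ i : Fin N, Matrix (Fin n) (Fin (m i)) ℝ)
    (Q : ℕ → Matrix (Fin n) (Fin n) ℝ) (hQ : ∀ k, (Q k).PosDef)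
    (R : ∀ _ : ℕ, ∀ i : Fin N, Matrix (Fin (m i)) (Fin (m i)) ℝ)
    (hR : ∀ k i, (R k i).PosDef)
    (κB κQ1 κR1 : ℝ) (hκB : 0 < κB) (hκQ1 : 0 < κQ1) (hκR1 : 0 < κR1)
    (hB : ∀ k i, ‖LinearMap.toContinuousLinearMap (Matrix.toEuclideanLin (B k i))‖ ≤ κB)
    (hQlb : ∀ k, loewnerLE (κQ1 • (1 : Matrix (Fin n) (Fin n) ℝ)) (Q k))
    (hRlb : ∀ k i, loewnerLE (κR1 • (1 : Matrix (Fin (m i)) (Fin (m i)) ℝ)) (R k i))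
    (Pbar Pm Pbrv : ℕ → Fin N → Matrix (Fin n) (Fin n) ℝ)
    (hPbrvM : ∀ i, Pbrv M i = (N : ℝ) • Q M)
    (hPbar : ∀ k < M, ∀ i,
      Pbar (k+1) i = ((Pbrv (k+1) i)⁻¹ + B k i * (R k i)⁻¹ * (B k i)ᵀ)⁻¹)
    (hPm : ∀ k < M, ∀ i, Pm (k+1) i = (∑ j ∈ nbr i, ω i j • (Pbar (k+1) j)⁻¹)⁻¹)
    (hPbrv : ∀ k < M, ∀ i, Pbrv k i = (A k)ᵀ * Pm (k+1) i * A k + (N : ℝ) • Q k) :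
    ∀ k < M, ∀ i, loewnerLE ((Pm (k+1) i)⁻¹)
      (((⨆ p : Fin N × Fin N, ω p.1 p.2) / κQ1 +
        (⨆ p : Fin N × Fin N, ω p.1 p.2) * N * κB ^ 2 / κR1) •
        (1 : Matrix (Fin n) (Fin n) ℝ)) := by
  classical
  have hbdd : BddAbove (Set.range fun p : Fin N × Fin N => ω p.1 p.2) :=
    Set.Finite.bddAbove (Set.finite_range _)
  set nm : ℝ := ⨆ p : Fin N × Fin N, ω p.1 p.2 with hnm
  have hωle : ∀ i j, ω i j ≤ nm := fun i j => le_ciSup hbdd (i, j)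
  have hNpos : (0:ℝ) < N := Nat.cast_pos.mpr hN
  have hNQ : (0:ℝ) < (N:ℝ) * κQ1 := mul_pos hNpos hκQ1
  obtain ⟨i0⟩ : Nonempty (Fin N) := ⟨⟨0, hN⟩⟩
  have hnm0 : 0 < nm := lt_of_lt_of_le (hω i0 i0 (hself i0)).1 (hωle i0 i0)
  set c0 : ℝ := ((N:ℝ) * κQ1)⁻¹ + κB ^ 2 / κR1 with hc0
  have hc0pos : 0 < c0 := by positivity
  set cf : ℝ := nm / κQ1 + nm * (N:ℝ) * κB ^ 2 / κR1 with hcf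
  -- The main one-step argument.
  have step : ∀ k, k < M → (∀ j, (Pbrv (k+1) j - ((N:ℝ)*κQ1) • 1).PosSemidef) →
      ∀ i, (Pm (k+1) i).PosDef ∧ (cf • (1 : Matrix (Fin n) (Fin n) ℝ)
        - (Pm (k+1) i)⁻¹).PosSemidef := by
    intro k hk hlb
    have pbar : ∀ j, ((Pbar (k+1) j)⁻¹).PosDef ∧
        ∀ x : Fin n → ℝ, x ⬝ᵥ ((Pbar (k+1) j)⁻¹ *ᵥ x) ≤ c0 * (x ⬝ᵥ x) := by
      intro j
      obtain ⟨hPD, hqf⟩ := inv_qf_bound' hNQ (hlb j)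
      obtain ⟨hRPD, hRqf⟩ := inv_qf_bound' hκR1 (hRlb k j)
      set T := (Pbrv (k+1) j)⁻¹ + B k j * (R k j)⁻¹ * (B k j)ᵀ with hT
      have hBRB : (B k j * (R k j)⁻¹ * (B k j)ᵀ).PosSemidef := by
        have := (hR k j).inv.posSemidef.mul_mul_conjTranspose_same (B k j)
        rwa [Matrix.conjTranspose_eq_transpose_of_trivial] at this
      have hTPD : T.PosDef := hPD.inv.add_posSemidef hBRB
      have qT : ∀ x : Fin n → ℝ, x ⬝ᵥ (T *ᵥ x) ≤ c0 * (x ⬝ᵥ x) := by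
        intro x
        have e1 : x ⬝ᵥ (T *ᵥ x) = x ⬝ᵥ ((Pbrv (k+1) j)⁻¹ *ᵥ x)
            + ((B k j)ᵀ *ᵥ x) ⬝ᵥ ((R k j)⁻¹ *ᵥ ((B k j)ᵀ *ᵥ x)) := by
          rw [hT, Matrix.add_mulVec, dotProduct_add]
          congr 1
          rw [← Matrix.mulVec_mulVec, ← Matrix.mulVec_mulVec,
            Matrix.dotProduct_mulVec x (B k j), ← Matrix.mulVec_transpose]
        have e2 := hRqf ((B k j)ᵀ *ᵥ x)
        have e3 := transpose_mulVec_dot_le' (hB k j) x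
        have e4 := hqf x
        have e5 : κR1⁻¹ * (((B k j)ᵀ *ᵥ x) ⬝ᵥ ((B k j)ᵀ *ᵥ x))
            ≤ κR1⁻¹ * (κB ^ 2 * (x ⬝ᵥ x)) :=
          mul_le_mul_of_nonneg_left e3 (by positivity)
        have hring : c0 * (x ⬝ᵥ x)
            = ((N:ℝ)*κQ1)⁻¹ * (x ⬝ᵥ x) + κR1⁻¹ * (κB ^ 2 * (x ⬝ᵥ x)) := by
          rw [hc0]; ring
        rw [e1, hring]
        exact add_le_add e4 (le_trans e2 e5)
      have hTdet : IsUnit T.det := isUnit_iff_ne_zero.2 hTPD.det_pos.ne'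
      have hpb : (Pbar (k+1) j)⁻¹ = T := by
        rw [hPbar k hk j, ← hT, Matrix.nonsing_inv_nonsing_inv _ hTdet]
      rw [hpb]
      exact ⟨hTPD, qT⟩
    intro i
    set S := ∑ j ∈ nbr i, ω i j • (Pbar (k+1) j)⁻¹ with hS
    have hSPD : S.PosDef := by
      rw [hS, ← Finset.add_sum_erase _ _ (hself i)]
      exact (pd_smul' (hω i i (hself i)).1 (pbar i).1).add_posSemidef
        (psd_sum' _ _ fun j hj =>
          psd_smul' (le_of_lt (hω i j (Finset.mem_of_mem_erase hj)).1)
            (pbar j).1.posSemidef)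
    have hSdet : IsUnit S.det := isUnit_iff_ne_zero.2 hSPD.det_pos.ne'
    have hPmEq : Pm (k+1) i = S⁻¹ := hPm k hk i
    have hPmPD : (Pm (k+1) i).PosDef := by rw [hPmEq]; exact hSPD.inv
    refine ⟨hPmPD, ?_⟩
    have hPmInv : (Pm (k+1) i)⁻¹ = S := by
      rw [hPmEq, Matrix.nonsing_inv_nonsing_inv _ hSdet]
    rw [hPmInv]
    refine psd_of_qf' ((herm_smul' cf Matrix.isHermitian_one).sub hSPD.isHermitian) fun x => ?_
    have hxx := dot_self_nonneg' x
    have hqS : x ⬝ᵥ (S *ᵥ x) = ∑ j ∈ nbr i, ω i j * (x ⬝ᵥ ((Pbar (k+1) j)⁻¹ *ᵥ x)) := by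
      rw [hS, qf_sum']
      refine Finset.sum_congr rfl fun j _ => ?_
      rw [Matrix.smul_mulVec, dotProduct_smul, smul_eq_mul]
    have hsum : x ⬝ᵥ (S *ᵥ x) ≤ ((nbr i).card : ℝ) * (nm * (c0 * (x ⬝ᵥ x))) := by
      rw [hqS]
      have := Finset.sum_le_card_nsmul (nbr i)
        (fun j => ω i j * (x ⬝ᵥ ((Pbar (k+1) j)⁻¹ *ᵥ x))) (nm * (c0 * (x ⬝ᵥ x)))
        (fun j hj => mul_le_mul (hωle i j) ((pbar j).2 x)
          (qf_nonneg' (pbar j).1.posSemidef x) hnm0.le)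
      simpa [nsmul_eq_mul] using this
    have hcard : ((nbr i).card : ℝ) ≤ (N:ℝ) := by
      have h1 : (nbr i).card ≤ N := by
        simpa using Finset.card_le_univ (nbr i)
      exact_mod_cast h1
    have hfin : (N:ℝ) * (nm * (c0 * (x ⬝ᵥ x))) = cf * (x ⬝ᵥ x) := by
      rw [hc0, hcf]
      field_simp
    have hSx : x ⬝ᵥ (S *ᵥ x) ≤ cf * (x ⬝ᵥ x) := by
      calc x ⬝ᵥ (S *ᵥ x) ≤ ((nbr i).card : ℝ) * (nm * (c0 * (x ⬝ᵥ x))) := hsum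
        _ ≤ (N:ℝ) * (nm * (c0 * (x ⬝ᵥ x))) :=
            mul_le_mul_of_nonneg_right hcard (by positivity)
        _ = cf * (x ⬝ᵥ x) := hfin
    rw [Matrix.sub_mulVec, dotProduct_sub, Matrix.smul_mulVec,
      Matrix.one_mulVec, dotProduct_smul, smul_eq_mul]
    linarith
  -- Backward induction: uniform lower bound on `Pbrv`.
  have key : ∀ d k, k + d = M → ∀ i,
      (Pbrv k i - ((N:ℝ)*κQ1) • 1).PosSemidef := by
    intro d
    induction d with
    | zero =>
      intro k hk i
      have hkM : k = M := by omega
      rw [hkM, hPbrvM i]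
      have hEq : (N:ℝ) • Q M - ((N:ℝ)*κQ1) • (1 : Matrix (Fin n) (Fin n) ℝ)
          = (N:ℝ) • (Q M - κQ1 • 1) := by rw [smul_sub, smul_smul]
      rw [hEq]
      exact psd_smul' hNpos.le (hQlb M)
    | succ d ih =>
      intro k hk i
      have hkM : k < M := by omega
      have hlb : ∀ j, (Pbrv (k+1) j - ((N:ℝ)*κQ1) • 1).PosSemidef :=
        fun j => ih (k+1) (by omega) j
      have hPmPD := (step k hkM hlb i).1
      rw [hPbrv k hkM i]
      have hEq : (A k)ᵀ * Pm (k+1) i * A k + (N:ℝ) • Q k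
            - ((N:ℝ)*κQ1) • (1 : Matrix (Fin n) (Fin n) ℝ)
          = (A k)ᵀ * Pm (k+1) i * A k + (N:ℝ) • (Q k - κQ1 • 1) := by
        rw [smul_sub, smul_smul]; abel
      rw [hEq]
      have hAA : ((A k)ᵀ * Pm (k+1) i * A k).PosSemidef := by
        have := hPmPD.posSemidef.conjTranspose_mul_mul_same (A k)
        rwa [Matrix.conjTranspose_eq_transpose_of_trivial] at this
      exact hAA.add (psd_smul' hNpos.le (hQlb k))
  intro k hk i
  have hlb : ∀ j, (Pbrv (k+1) j - ((N:ℝ)*κQ1) • 1).PosSemidef :=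
    fun j => key (M - (k+1)) (k+1) (by omega) j
  exact (step k hk hlb i).2
end

section
/- Under the communication setup, the backward controller recursion with horizon M, and the distributed controller with virtual dynamics, for every time step k ∈ {0,…,M−1} and every agent i the following one-step inequality holds: x_{k+1,i}^T P̆_{k+1,i} x_{k+1,i} + u_{k,i}^T R_{k,i} u_{k,i} ≤ Σ_{j∈𝒩̄_i} ω_ji · x_{k,j}^T A_k^T P_{k+1,j} P̄_{k+1,i}^{-1} P_{k+1,j} A_k x_{k,j}. -/
open Matrix Finset

namespace PerAgentAux

lemma dot_mulVec_flip {p q : ℕ} (C : Matrix (Fin p) (Fin q) ℝ) (y : Fin q → ℝ) (w : Fin p → ℝ) :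
    (C *ᵥ y) ⬝ᵥ w = y ⬝ᵥ (Cᵀ *ᵥ w) := by
  rw [dotProduct_mulVec, vecMul_transpose]

lemma dot_mulVec_symm {p : ℕ} {P : Matrix (Fin p) (Fin p) ℝ} (hPt : Pᵀ = P)
    (v w : Fin p → ℝ) : v ⬝ᵥ (P *ᵥ w) = w ⬝ᵥ (P *ᵥ v) := by
  rw [dotProduct_comm, dot_mulVec_flip, hPt]



variable {n : ℕ}

lemma posDef_smul {c : ℝ} (hc : 0 < c) {Q : Matrix (Fin n) (Fin n) ℝ} (hQ : Q.PosDef) :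
    (c • Q).PosDef := by
  refine ⟨?_, fun x hx => ?_⟩
  · unfold Matrix.IsHermitian
    rw [conjTranspose_smul, hQ.1.eq]
    simp
  · exact (hQ.smul hc).2 hx

lemma posSemidef_sum {ι : Type*} [DecidableEq ι] (F : Finset ι)
    (f : ι → Matrix (Fin n) (Fin n) ℝ)
    (h : ∀ j ∈ F, (f j).PosSemidef) : (∑ j ∈ F, f j).PosSemidef := by
  induction F using Finset.induction with
  | empty => simpa using Matrix.PosSemidef.zero
  | insert _ _ hj ih =>
    rw [Finset.sum_insert hj]
    exact (h _ (Finset.mem_insert_self _ _)).add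
      (ih fun j hjF => h j (Finset.mem_insert_of_mem hjF))

lemma posDef_sum {ι : Type*} [DecidableEq ι] {F : Finset ι} (hne : F.Nonempty)
    (f : ι → Matrix (Fin n) (Fin n) ℝ)
    (h : ∀ j ∈ F, (f j).PosDef) : (∑ j ∈ F, f j).PosDef := by
  obtain ⟨i, hi⟩ := hne
  rw [← Finset.add_sum_erase F f hi]
  exact (h i hi).add_posSemidef
    (posSemidef_sum _ _ fun j hj => (h j (Finset.mem_of_mem_erase hj)).posSemidef)

lemma pbar_posDef {P : Matrix (Fin n) (Fin n) ℝ} (hP : P.PosDef)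
    {m : ℕ} {R : Matrix (Fin m) (Fin m) ℝ} (hR : R.PosDef) (B : Matrix (Fin n) (Fin m) ℝ) :
    ((P⁻¹ + B * R⁻¹ * Bᵀ)⁻¹).PosDef := by
  apply Matrix.PosDef.inv
  apply hP.inv.add_posSemidef
  have := hR.inv.posSemidef.mul_mul_conjTranspose_same B
  rwa [conjTranspose_eq_transpose_of_trivial] at this

lemma psd_transpose_mul_mul {P : Matrix (Fin n) (Fin n) ℝ} (hP : P.PosSemidef)
    {m : ℕ} (B : Matrix (Fin n) (Fin m) ℝ) : (Bᵀ * P * B).PosSemidef := by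
  have := hP.conjTranspose_mul_mul_same B
  rwa [conjTranspose_eq_transpose_of_trivial] at this



lemma dot_quad {p q : ℕ} (C : Matrix (Fin p) (Fin q) ℝ) (M : Matrix (Fin p) (Fin p) ℝ)
    (y : Fin q → ℝ) :
    (C *ᵥ y) ⬝ᵥ (M *ᵥ (C *ᵥ y)) = y ⬝ᵥ ((Cᵀ * M * C) *ᵥ y) := by
  rw [dot_mulVec_flip, mulVec_mulVec, mulVec_mulVec, Matrix.mul_assoc]

lemma woodbury {p q : ℕ} {P : Matrix (Fin p) (Fin p) ℝ} {R : Matrix (Fin q) (Fin q) ℝ}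
    (B : Matrix (Fin p) (Fin q) ℝ) (hPd : IsUnit P.det) (hRd : IsUnit R.det)
    (hSd : IsUnit (R + Bᵀ * P * B).det) :
    (P⁻¹ + B * R⁻¹ * Bᵀ)⁻¹ = P - P * B * ((R + Bᵀ * P * B)⁻¹ * (Bᵀ * P)) := by
  apply Matrix.inv_eq_right_inv
  set S := R + Bᵀ * P * B with hSdef
  have hBPB : Bᵀ * P * B = S - R := by rw [hSdef, add_sub_cancel_left]
  have hmid : Bᵀ * (P * (B * (S⁻¹ * (Bᵀ * P)))) = Bᵀ * P - R * (S⁻¹ * (Bᵀ * P)) := by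
    have h1 : Bᵀ * (P * (B * (S⁻¹ * (Bᵀ * P)))) = (Bᵀ * P * B) * (S⁻¹ * (Bᵀ * P)) := by
      simp [Matrix.mul_assoc]
    rw [h1, hBPB, Matrix.sub_mul, Matrix.mul_nonsing_inv_cancel_left _ _ hSd]
  rw [Matrix.add_mul, Matrix.mul_sub, Matrix.mul_sub]
  simp only [Matrix.mul_assoc]
  rw [Matrix.nonsing_inv_mul _ hPd, Matrix.nonsing_inv_mul_cancel_left _ _ hPd, hmid,
    Matrix.mul_sub, Matrix.mul_sub, Matrix.nonsing_inv_mul_cancel_left _ _ hRd]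
  abel

lemma completed_square {p q : ℕ} {P : Matrix (Fin p) (Fin p) ℝ} (hPt : Pᵀ = P)
    (hPd : IsUnit P.det) {R : Matrix (Fin q) (Fin q) ℝ} (hRd : IsUnit R.det)
    (B : Matrix (Fin p) (Fin q) ℝ) (hSd : IsUnit (R + Bᵀ * P * B).det)
    (z : Fin p → ℝ) :
    (z + B *ᵥ ((-((R + Bᵀ * P * B)⁻¹ * (Bᵀ * P))) *ᵥ z)) ⬝ᵥ
      (P *ᵥ (z + B *ᵥ ((-((R + Bᵀ * P * B)⁻¹ * (Bᵀ * P))) *ᵥ z)))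
    + ((-((R + Bᵀ * P * B)⁻¹ * (Bᵀ * P))) *ᵥ z) ⬝ᵥ
      (R *ᵥ ((-((R + Bᵀ * P * B)⁻¹ * (Bᵀ * P))) *ᵥ z))
    = z ⬝ᵥ ((P⁻¹ + B * R⁻¹ * Bᵀ)⁻¹ *ᵥ z) := by
  set S := R + Bᵀ * P * B with hSdef
  set K := S⁻¹ * (Bᵀ * P) with hKdef
  set y := K *ᵥ z with hy
  have hneg : (-K) *ᵥ z = -y := by rw [Matrix.neg_mulVec, hy]
  have hSy : S *ᵥ y = (Bᵀ * P) *ᵥ z := by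
    rw [hy, mulVec_mulVec, hKdef, Matrix.mul_nonsing_inv_cancel_left _ _ hSd]
  have hd1 : z ⬝ᵥ (P *ᵥ (B *ᵥ y)) = y ⬝ᵥ ((Bᵀ * P) *ᵥ z) := by
    rw [dot_mulVec_symm hPt, dot_mulVec_flip, mulVec_mulVec]
  have hd2 : (B *ᵥ y) ⬝ᵥ (P *ᵥ z) = y ⬝ᵥ ((Bᵀ * P) *ᵥ z) := by
    rw [dot_mulVec_flip, mulVec_mulVec]
  have hcomb : (Bᵀ * P) *ᵥ (B *ᵥ y) + R *ᵥ y = S *ᵥ y := by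
    rw [mulVec_mulVec, hSdef, Matrix.add_mulVec]
    exact add_comm _ _
  have hd3 : (B *ᵥ y) ⬝ᵥ (P *ᵥ (B *ᵥ y)) + y ⬝ᵥ (R *ᵥ y) = y ⬝ᵥ ((Bᵀ * P) *ᵥ z) := by
    rw [dot_mulVec_flip, mulVec_mulVec, ← dotProduct_add]
    rw [show (Bᵀ * P) *ᵥ (B *ᵥ y) + R *ᵥ y = S *ᵥ y from hcomb, hSy]
  have hyt : y ⬝ᵥ ((Bᵀ * P) *ᵥ z) = z ⬝ᵥ ((P * B * K) *ᵥ z) := by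
    rw [← hd1, hy, mulVec_mulVec, mulVec_mulVec, ← Matrix.mul_assoc]
  have hW : (P⁻¹ + B * R⁻¹ * Bᵀ)⁻¹ = P - P * B * K := by
    rw [hKdef, hSdef]
    exact woodbury B hPd hRd hSd
  have hWz : z ⬝ᵥ ((P⁻¹ + B * R⁻¹ * Bᵀ)⁻¹ *ᵥ z)
      = z ⬝ᵥ (P *ᵥ z) - z ⬝ᵥ ((P * B * K) *ᵥ z) := by
    rw [hW, Matrix.sub_mulVec, dotProduct_sub]
  rw [hneg]
  have expand : (z + B *ᵥ (-y)) ⬝ᵥ (P *ᵥ (z + B *ᵥ (-y))) + (-y) ⬝ᵥ (R *ᵥ (-y))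
      = z ⬝ᵥ (P *ᵥ z) - z ⬝ᵥ (P *ᵥ (B *ᵥ y)) - (B *ᵥ y) ⬝ᵥ (P *ᵥ z)
        + ((B *ᵥ y) ⬝ᵥ (P *ᵥ (B *ᵥ y)) + y ⬝ᵥ (R *ᵥ y)) := by
    simp only [Matrix.mulVec_neg, Matrix.mulVec_add, dotProduct_add, add_dotProduct,
      dotProduct_neg, neg_dotProduct, neg_neg]
    ring
  rw [expand, hWz]
  linarith [hd1, hd2, hd3, hyt]


lemma psd_quad_nonneg {p : ℕ} {W : Matrix (Fin p) (Fin p) ℝ} (hW : W.PosSemidef)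
    (x : Fin p → ℝ) : 0 ≤ x ⬝ᵥ (W *ᵥ x) := by
  simpa using hW.dotProduct_mulVec_nonneg x

lemma quad_sum_le {p : ℕ} {ι : Type*} [DecidableEq ι] (F : Finset ι) (w : ι → ℝ)
    (hw0 : ∀ j ∈ F, 0 ≤ w j) (hw1 : ∑ j ∈ F, w j ≤ 1) (v : ι → (Fin p → ℝ))
    {W : Matrix (Fin p) (Fin p) ℝ} (hW : W.PosSemidef) :
    (∑ j ∈ F, w j • v j) ⬝ᵥ (W *ᵥ ∑ j ∈ F, w j • v j)
      ≤ ∑ j ∈ F, w j * (v j ⬝ᵥ (W *ᵥ v j)) := by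
  have hWt : Wᵀ = W := by
    have := hW.1
    rwa [Matrix.IsHermitian, conjTranspose_eq_transpose_of_trivial] at this
  set q : ι → ℝ := fun j => v j ⬝ᵥ (W *ᵥ v j) with hq
  have hb : ∀ x y : Fin p → ℝ,
      x ⬝ᵥ (W *ᵥ y) ≤ (x ⬝ᵥ (W *ᵥ x) + y ⬝ᵥ (W *ᵥ y)) / 2 := by
    intro x y
    have h0 := psd_quad_nonneg hW (x - y)
    have hs : y ⬝ᵥ (W *ᵥ x) = x ⬝ᵥ (W *ᵥ y) := dot_mulVec_symm hWt y x
    rw [Matrix.mulVec_sub, sub_dotProduct, dotProduct_sub, dotProduct_sub] at h0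
    linarith
  have hdsl : ∀ (G : Finset ι) (g : ι → Fin p → ℝ) (y : Fin p → ℝ),
      (∑ j ∈ G, g j) ⬝ᵥ y = ∑ j ∈ G, g j ⬝ᵥ y := by
    intro G g y
    simp only [dotProduct, Finset.sum_apply, Finset.sum_mul]
    exact Finset.sum_comm
  have hdsr : ∀ (G : Finset ι) (x : Fin p → ℝ) (g : ι → Fin p → ℝ),
      x ⬝ᵥ (∑ j ∈ G, g j) = ∑ j ∈ G, x ⬝ᵥ g j := by
    intro G x g
    simp only [dotProduct, Finset.sum_apply, Finset.mul_sum]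
    exact Finset.sum_comm
  have hmv : W *ᵥ (∑ j ∈ F, w j • v j) = ∑ j ∈ F, w j • (W *ᵥ v j) := by
    simp only [← Matrix.mulVecLin_apply, map_sum]
    exact Finset.sum_congr rfl fun j _ => (W.mulVecLin).map_smul _ _
  have expand : (∑ j ∈ F, w j • v j) ⬝ᵥ (W *ᵥ ∑ j ∈ F, w j • v j)
      = ∑ j ∈ F, ∑ l ∈ F, (w j * w l) * (v j ⬝ᵥ (W *ᵥ v l)) := by
    rw [hmv, hdsl]
    refine Finset.sum_congr rfl fun j _ => ?_
    rw [smul_dotProduct, hdsr, smul_eq_mul, Finset.mul_sum]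
    refine Finset.sum_congr rfl fun l _ => ?_
    rw [dotProduct_smul, smul_eq_mul]
    ring
  rw [expand]
  have step1 : ∑ j ∈ F, ∑ l ∈ F, (w j * w l) * (v j ⬝ᵥ (W *ᵥ v l))
      ≤ ∑ j ∈ F, ∑ l ∈ F, (w j * w l) * ((q j + q l) / 2) := by
    refine Finset.sum_le_sum fun j hj => Finset.sum_le_sum fun l hl => ?_
    have hwjl : 0 ≤ w j * w l := mul_nonneg (hw0 j hj) (hw0 l hl)
    exact mul_le_mul_of_nonneg_left (hb (v j) (v l)) hwjl
  have hswap : ∑ j ∈ F, ∑ l ∈ F, (w j * w l) * q j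
      = ∑ j ∈ F, ∑ l ∈ F, (w j * w l) * q l := by
    rw [Finset.sum_comm]
    exact Finset.sum_congr rfl fun a _ => Finset.sum_congr rfl fun b _ => by ring
  have step2 : ∑ j ∈ F, ∑ l ∈ F, (w j * w l) * ((q j + q l) / 2)
      = (∑ j ∈ F, w j) * (∑ j ∈ F, w j * q j) := by
    have e1 : ∑ j ∈ F, ∑ l ∈ F, (w j * w l) * ((q j + q l) / 2)
        = (∑ j ∈ F, ∑ l ∈ F, (w j * w l) * q j) / 2
          + (∑ j ∈ F, ∑ l ∈ F, (w j * w l) * q l) / 2 := by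
      simp only [Finset.sum_div, ← Finset.sum_add_distrib]
      exact Finset.sum_congr rfl fun a _ => Finset.sum_congr rfl fun b _ => by ring
    rw [e1, hswap, add_halves, Finset.sum_mul_sum]
    exact Finset.sum_congr rfl fun a _ => Finset.sum_congr rfl fun b _ => by ring
  have hq0 : 0 ≤ ∑ j ∈ F, w j * q j :=
    Finset.sum_nonneg fun j hj => mul_nonneg (hw0 j hj) (psd_quad_nonneg hW (v j))
  calc ∑ j ∈ F, ∑ l ∈ F, (w j * w l) * (v j ⬝ᵥ (W *ᵥ v l))
      ≤ (∑ j ∈ F, w j) * (∑ j ∈ F, w j * q j) := by rw [← step2]; exact step1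
    _ ≤ ∑ j ∈ F, w j * q j := mul_le_of_le_one_left hq0 hw1

lemma pd_transpose_eq {p : ℕ} {P : Matrix (Fin p) (Fin p) ℝ} (hP : P.PosDef) : Pᵀ = P := by
  have := hP.1
  rwa [Matrix.IsHermitian, conjTranspose_eq_transpose_of_trivial] at this

end PerAgentAux

/-- Per-agent one-step Lyapunov-type inequality from the proof of Theorem 2 of the
paper: under the communication setup, the backward controller recursion and the
distributed controller with virtual dynamics, for every `k < M` and every agent `i`,
`x_{k+1,i}ᵀ P̆_{k+1,i} x_{k+1,i} + u_{k,i}ᵀ R_{k,i} u_{k,i}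
  ≤ Σ_{j ∈ 𝒩̄_i} ω_{ji} x_{k,j}ᵀ A_kᵀ P_{k+1,j} P̄_{k+1,i}⁻¹ P_{k+1,j} A_k x_{k,j}`. -/
theorem per_agent_one_step_inequality {n N : ℕ} (hN : 0 < N) (m : Fin N → ℕ)
    (nbr : Fin N → Finset (Fin N)) (hself : ∀ i, i ∈ nbr i)
    (ω : Fin N → Fin N → ℝ)
    (hω : ∀ i, ∀ j ∈ nbr i, 0 < ω i j ∧
      ω i j ≤ 1 / ((Finset.univ.filter (fun l => j ∈ nbr l)).card : ℝ))
    (M : ℕ)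
    (A : ℕ → Matrix (Fin n) (Fin n) ℝ)
    (B : ∀ _ : ℕ, ∀ i : Fin N, Matrix (Fin n) (Fin (m i)) ℝ)
    (Q : ℕ → Matrix (Fin n) (Fin n) ℝ) (hQ : ∀ k, (Q k).PosDef)
    (R : ∀ _ : ℕ, ∀ i : Fin N, Matrix (Fin (m i)) (Fin (m i)) ℝ)
    (hR : ∀ k i, (R k i).PosDef)
    (Pbar Pm Pbrv : ℕ → Fin N → Matrix (Fin n) (Fin n) ℝ)
    (hPbrvM : ∀ i, Pbrv M i = (N : ℝ) • Q M)
    (hPbar : ∀ k < M, ∀ i,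
      Pbar (k+1) i = ((Pbrv (k+1) i)⁻¹ + B k i * (R k i)⁻¹ * (B k i)ᵀ)⁻¹)
    (hPm : ∀ k < M, ∀ i, Pm (k+1) i = (∑ j ∈ nbr i, ω i j • (Pbar (k+1) j)⁻¹)⁻¹)
    (hPbrv : ∀ k < M, ∀ i, Pbrv k i = (A k)ᵀ * Pm (k+1) i * A k + (N : ℝ) • Q k)
    (xv : ℕ → Fin N → Fin n → ℝ)
    (u : ∀ _ : ℕ, ∀ i : Fin N, Fin (m i) → ℝ)
    (hxv : ∀ k < M, ∀ i, xv (k+1) i =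
      (∑ j ∈ Finset.univ.filter (fun j => i ∈ nbr j),
        ω j i • ((Pbar (k+1) i)⁻¹ *ᵥ (Pm (k+1) j *ᵥ (A k *ᵥ xv k j))))
      + B k i *ᵥ u k i)
    (hu : ∀ k < M, ∀ i, u k i =
      (-((R k i + (B k i)ᵀ * Pbrv (k+1) i * B k i)⁻¹ * ((B k i)ᵀ * Pbrv (k+1) i))) *ᵥ
      (∑ j ∈ Finset.univ.filter (fun j => i ∈ nbr j),
        ω j i • ((Pbar (k+1) i)⁻¹ *ᵥ (Pm (k+1) j *ᵥ (A k *ᵥ xv k j)))))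
    :
    ∀ k < M, ∀ i,
      xv (k+1) i ⬝ᵥ (Pbrv (k+1) i *ᵥ xv (k+1) i) + u k i ⬝ᵥ (R k i *ᵥ u k i)
      ≤ ∑ j ∈ Finset.univ.filter (fun j => i ∈ nbr j),
          ω j i * (xv k j ⬝ᵥ
            (((A k)ᵀ * Pm (k+1) j * (Pbar (k+1) i)⁻¹ * Pm (k+1) j * A k) *ᵥ xv k j)) := by
  classical
  intro k hk i
  have castN : (0:ℝ) < (N:ℝ) := by exact_mod_cast hN
  -- positive definiteness of the recursion, by downward induction
  have hPDbrv : ∀ d k', k' + d = M → ∀ i', (Pbrv k' i').PosDef := by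
    intro d
    induction d with
    | zero =>
      intro k' hk' i'
      have hkM : k' = M := by omega
      rw [hkM, hPbrvM]
      exact PerAgentAux.posDef_smul castN (hQ M)
    | succ d ih =>
      intro k' hk' i'
      have hlt : k' < M := by omega
      have hPD1 : ∀ j, (Pbrv (k'+1) j).PosDef := fun j => ih (k'+1) (by omega) j
      have hPbarPD : ∀ j, (Pbar (k'+1) j).PosDef := by
        intro j
        rw [hPbar k' hlt j]
        exact PerAgentAux.pbar_posDef (hPD1 j) (hR k' j) _
      have hPmPD : (Pm (k'+1) i').PosDef := by
        rw [hPm k' hlt i']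
        apply Matrix.PosDef.inv
        apply PerAgentAux.posDef_sum ⟨i', hself i'⟩
        intro j hj
        exact PerAgentAux.posDef_smul (hω i' j hj).1 (hPbarPD j).inv
      rw [hPbrv k' hlt i']
      exact Matrix.PosDef.posSemidef_add
        (PerAgentAux.psd_transpose_mul_mul hPmPD.posSemidef (A k'))
        (PerAgentAux.posDef_smul castN (hQ k'))
  have hPD1 : ∀ j, (Pbrv (k+1) j).PosDef :=
    fun j => hPDbrv (M - (k+1)) (k+1) (by omega) j
  have hPbarPD : ∀ j, (Pbar (k+1) j).PosDef := by
    intro j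
    rw [hPbar k hk j]
    exact PerAgentAux.pbar_posDef (hPD1 j) (hR k j) _
  have hPmPD : ∀ j, (Pm (k+1) j).PosDef := by
    intro j
    rw [hPm k hk j]
    apply Matrix.PosDef.inv
    apply PerAgentAux.posDef_sum ⟨j, hself j⟩
    intro l hl
    exact PerAgentAux.posDef_smul (hω j l hl).1 (hPbarPD l).inv
  set F : Finset (Fin N) := Finset.univ.filter (fun j => i ∈ nbr j) with hF
  set v : Fin N → Fin n → ℝ :=
    fun j => (Pbar (k+1) i)⁻¹ *ᵥ (Pm (k+1) j *ᵥ (A k *ᵥ xv k j)) with hv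
  set z : Fin n → ℝ := ∑ j ∈ F, ω j i • v j with hz
  -- the closed-loop step equals the z-quadratic form in Pbar
  have hP := hPD1 i
  have hPt := PerAgentAux.pd_transpose_eq hP
  have hSd : IsUnit (R k i + (B k i)ᵀ * Pbrv (k+1) i * (B k i)).det :=
    ((hR k i).add_posSemidef
      (PerAgentAux.psd_transpose_mul_mul hP.posSemidef (B k i))).det_pos.ne'.isUnit
  have key := PerAgentAux.completed_square hPt hP.det_pos.ne'.isUnit
    (hR k i).det_pos.ne'.isUnit (B k i) hSd z
  rw [← hPbar k hk i] at key
  have hgoalL : xv (k+1) i ⬝ᵥ (Pbrv (k+1) i *ᵥ xv (k+1) i) + u k i ⬝ᵥ (R k i *ᵥ u k i)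
      = z ⬝ᵥ (Pbar (k+1) i *ᵥ z) := by
    rw [hxv k hk i, hu k hk i]
    exact key
  rw [hgoalL]
  have hW := hPbarPD i
  have hWt := PerAgentAux.pd_transpose_eq hW
  have hWd : IsUnit (Pbar (k+1) i).det := hW.det_pos.ne'.isUnit
  -- weights
  have hiF : i ∈ F := Finset.mem_filter.mpr ⟨Finset.mem_univ i, hself i⟩
  have hcard : (0:ℝ) < (F.card : ℝ) := by
    exact_mod_cast Finset.card_pos.mpr ⟨i, hiF⟩
  have hw0 : ∀ j ∈ F, 0 ≤ ω j i := fun j hj =>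
    (hω j i (Finset.mem_filter.mp hj).2).1.le
  have hw1 : ∑ j ∈ F, ω j i ≤ 1 := by
    calc ∑ j ∈ F, ω j i ≤ ∑ _j ∈ F, 1 / (F.card : ℝ) :=
          Finset.sum_le_sum fun j hj => (hω j i (Finset.mem_filter.mp hj).2).2
      _ = (F.card : ℝ) * (1 / (F.card : ℝ)) := by
          rw [Finset.sum_const, nsmul_eq_mul]
      _ = 1 := by field_simp
  have hCS : z ⬝ᵥ (Pbar (k+1) i *ᵥ z) ≤ ∑ j ∈ F, ω j i * (v j ⬝ᵥ (Pbar (k+1) i *ᵥ v j)) :=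
    PerAgentAux.quad_sum_le F (fun j => ω j i) hw0 hw1 v hW.posSemidef
  refine le_trans hCS (le_of_eq (Finset.sum_congr rfl fun j hj => ?_))
  -- per-term identification
  congr 1
  have hPmt := PerAgentAux.pd_transpose_eq (hPmPD j)
  set W := Pbar (k+1) i with hWdef
  set y : Fin n → ℝ := (Pm (k+1) j * A k) *ᵥ xv k j with hy
  have hvy : v j = W⁻¹ *ᵥ y := by
    rw [hv, hy, ← Matrix.mulVec_mulVec]
  have hWy : W *ᵥ (W⁻¹ *ᵥ y) = y := by
    rw [Matrix.mulVec_mulVec, Matrix.mul_nonsing_inv _ hWd, Matrix.one_mulVec]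
  have hWinvT : (W⁻¹)ᵀ = W⁻¹ := by
    rw [Matrix.transpose_nonsing_inv, hWt]
  calc v j ⬝ᵥ (W *ᵥ v j) = (W⁻¹ *ᵥ y) ⬝ᵥ y := by rw [hvy, hWy]
    _ = y ⬝ᵥ (W⁻¹ *ᵥ y) := by rw [PerAgentAux.dot_mulVec_flip, hWinvT]
    _ = xv k j ⬝ᵥ (((Pm (k+1) j * A k)ᵀ * W⁻¹ * (Pm (k+1) j * A k)) *ᵥ xv k j) := by
          rw [hy, PerAgentAux.dot_quad]
    _ = xv k j ⬝ᵥ (((A k)ᵀ * Pm (k+1) j * W⁻¹ * Pm (k+1) j * A k) *ᵥ xv k j) := by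
          rw [Matrix.transpose_mul, hPmt]
          congr 2
          simp only [Matrix.mul_assoc]
end

section
/- Under the communication setup, the backward controller recursion with horizon M, and the distributed controller with virtual dynamics initialized at x_{0,i} = x_0/N, the auxiliary cost Ĵ_M := Σ_{i=1}^N ( Σ_{k=0}^M x_{k,i}^T (N Q_k) x_{k,i} + Σ_{k=0}^{M−1} u_{k,i}^T R_{k,i} u_{k,i} ) satisfies Ĵ_M ≤ Σ_{i=1}^N x_{0,i}^T P̆_{0,i} x_{0,i} = (1/N^2) Σ_{i=1}^N x_0^T P̆_{0,i} x_0. -/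
open Matrix Finset

set_option linter.unusedSectionVars false

open Matrix Finset

namespace RCTB

variable {ι : Type*} {nn mm : Type*} [Fintype nn] [Fintype mm] [DecidableEq nn] [DecidableEq mm]

lemma dot_sum (x : nn → ℝ) (s : Finset ι) (f : ι → nn → ℝ) :
    x ⬝ᵥ (∑ j ∈ s, f j) = ∑ j ∈ s, x ⬝ᵥ f j := by
  simp only [dotProduct, Finset.sum_apply, Finset.mul_sum]
  exact Finset.sum_comm

lemma sum_dot (x : nn → ℝ) (s : Finset ι) (f : ι → nn → ℝ) :
    (∑ j ∈ s, f j) ⬝ᵥ x = ∑ j ∈ s, f j ⬝ᵥ x := by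
  simp only [dotProduct_comm _ x]; exact dot_sum x s f

lemma mulVec_sum (A : Matrix mm nn ℝ) (s : Finset ι) (f : ι → nn → ℝ) :
    A *ᵥ (∑ j ∈ s, f j) = ∑ j ∈ s, A *ᵥ f j := by
  simpa only [Matrix.mulVecLin_apply] using map_sum A.mulVecLin f s

lemma sum_mulVec' (s : Finset ι) (f : ι → Matrix mm nn ℝ) (x : nn → ℝ) :
    (∑ j ∈ s, f j) *ᵥ x = ∑ j ∈ s, f j *ᵥ x := by
  ext i
  simp only [Matrix.mulVec, dotProduct, Matrix.sum_apply, Finset.sum_mul, Finset.sum_apply]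
  exact Finset.sum_comm

lemma mulVec_dot (C : Matrix mm nn ℝ) (x : nn → ℝ) (y : mm → ℝ) :
    (C *ᵥ x) ⬝ᵥ y = x ⬝ᵥ (Cᵀ *ᵥ y) := by
  rw [Matrix.mulVec_transpose, dotProduct_comm (C *ᵥ x) y, Matrix.dotProduct_mulVec,
    dotProduct_comm]

lemma quad_conj (C : Matrix mm nn ℝ) (M : Matrix mm mm ℝ) (x : nn → ℝ) :
    (C *ᵥ x) ⬝ᵥ (M *ᵥ (C *ᵥ x)) = x ⬝ᵥ ((Cᵀ * M * C) *ᵥ x) := by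
  rw [mulVec_dot, Matrix.mulVec_mulVec, Matrix.mulVec_mulVec, Matrix.mul_assoc]

lemma symT {M : Matrix nn nn ℝ} (h : M.IsHermitian) : Mᵀ = M := by
  rw [← Matrix.conjTranspose_eq_transpose_of_trivial]; exact h

lemma smul_posDef {M : Matrix nn nn ℝ} (hM : M.PosDef) {c : ℝ} (hc : 0 < c) :
    (c • M).PosDef := by
  refine ⟨?_, fun x hx => ?_⟩
  · rw [Matrix.IsHermitian, Matrix.conjTranspose_smul, star_trivial, hM.1.eq]
  · exact (hM.smul hc).2 hx

lemma sum_posDef {s : Finset ι} (hs : s.Nonempty) {f : ι → Matrix nn nn ℝ}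
    (h : ∀ j ∈ s, (f j).PosDef) : (∑ j ∈ s, f j).PosDef := by
  refine ⟨?_, fun x hx => ?_⟩
  · rw [Matrix.IsHermitian, Matrix.conjTranspose_sum]
    exact Finset.sum_congr rfl fun j hj => (h j hj).1.eq
  · exact (Matrix.posDef_sum hs h).2 hx

lemma transpose_psd_conj {M : Matrix mm mm ℝ} (hM : M.PosSemidef) (C : Matrix mm nn ℝ) :
    (Cᵀ * M * C).PosSemidef := by
  have := hM.conjTranspose_mul_mul_same C
  rwa [Matrix.conjTranspose_eq_transpose_of_trivial] at this

end RCTB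

namespace RCTB

variable {ι : Type*} {nn mm : Type*} [Fintype nn] [Fintype mm] [DecidableEq nn] [DecidableEq mm]

lemma woodbury {P : Matrix nn nn ℝ} (hP : P.PosDef) {Rm : Matrix mm mm ℝ} (hR : Rm.PosDef)
    (B : Matrix nn mm ℝ) :
    (P⁻¹ + B * Rm⁻¹ * Bᵀ)⁻¹ = P - P * B * (Rm + Bᵀ * P * B)⁻¹ * (Bᵀ * P) := by
  have hS : (Rm + Bᵀ * P * B).PosDef :=
    hR.add_posSemidef (transpose_psd_conj hP.posSemidef B)
  have hdP : IsUnit P.det := isUnit_iff_ne_zero.mpr hP.det_pos.ne'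
  have hdR : IsUnit Rm.det := isUnit_iff_ne_zero.mpr hR.det_pos.ne'
  have hdS : IsUnit (Rm + Bᵀ * P * B).det := isUnit_iff_ne_zero.mpr hS.det_pos.ne'
  apply Matrix.inv_eq_right_inv
  have h1 : P⁻¹ * P = 1 := Matrix.nonsing_inv_mul _ hdP
  have h2 : Rm⁻¹ * Rm = 1 := Matrix.nonsing_inv_mul _ hdR
  have h3 : (Rm + Bᵀ * P * B) * (Rm + Bᵀ * P * B)⁻¹ = 1 := Matrix.mul_nonsing_inv _ hdS
  set T := (Rm + Bᵀ * P * B)⁻¹ with hT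
  have key : Rm⁻¹ * ((Bᵀ * P * B) * T) = Rm⁻¹ - T := by
    have hBPB : (Bᵀ * P * B) = (Rm + Bᵀ * P * B) - Rm := (add_sub_cancel_left Rm _).symm
    rw [hBPB, sub_mul, h3, mul_sub, mul_one, ← mul_assoc, h2, one_mul]
  have expand : (P⁻¹ + B * Rm⁻¹ * Bᵀ) * (P - P * B * T * (Bᵀ * P))
      = P⁻¹ * P + B * Rm⁻¹ * Bᵀ * P - (P⁻¹ * P) * (B * T * (Bᵀ * P))
        - B * (Rm⁻¹ * ((Bᵀ * P * B) * T)) * (Bᵀ * P) := by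
    simp only [Matrix.mul_add, Matrix.add_mul, Matrix.mul_sub, Matrix.sub_mul, Matrix.neg_mul,
      Matrix.mul_neg, neg_neg, Matrix.one_mul, Matrix.mul_one, Matrix.mul_assoc]
    abel
  rw [expand, h1, key]
  simp only [Matrix.mul_add, Matrix.add_mul, Matrix.mul_sub, Matrix.sub_mul, Matrix.neg_mul,
    Matrix.mul_neg, neg_neg, Matrix.one_mul, Matrix.mul_one, Matrix.mul_assoc]
  abel

lemma cos_alg {P : Matrix nn nn ℝ} {W T : Matrix mm mm ℝ} (B : Matrix nn mm ℝ)
    (hTW : T * W = 1) :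
    (1 + (-(P * B * T)) * Bᵀ) * P * (1 + B * (-(T * (Bᵀ * P))))
      + (-(P * B * T)) * (W - Bᵀ * P * B) * (-(T * (Bᵀ * P)))
    = P - P * B * T * (Bᵀ * P) := by
  have e2 : T * W * T = T := by rw [hTW, one_mul]
  have main : (1 + (-(P * B * T)) * Bᵀ) * P * (1 + B * (-(T * (Bᵀ * P))))
      + (-(P * B * T)) * (W - Bᵀ * P * B) * (-(T * (Bᵀ * P)))
      = P - P * B * T * (Bᵀ * P) - P * B * T * (Bᵀ * P)
        + P * B * (T * W * T) * (Bᵀ * P) := by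
    simp only [Matrix.mul_add, Matrix.add_mul, Matrix.mul_sub, Matrix.sub_mul, Matrix.neg_mul,
      Matrix.mul_neg, neg_neg, Matrix.one_mul, Matrix.mul_one, Matrix.mul_assoc]
    abel
  rw [main, e2]
  simp only [Matrix.mul_add, Matrix.add_mul, Matrix.mul_sub, Matrix.sub_mul, Matrix.neg_mul,
    Matrix.mul_neg, neg_neg, Matrix.one_mul, Matrix.mul_one, Matrix.mul_assoc]
  abel

lemma dot_jensen (s : Finset ι) (c : ι → ℝ) (hc : ∀ j ∈ s, 0 ≤ c j)
    (h1 : ∑ j ∈ s, c j ≤ 1) (w : ι → nn → ℝ) :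
    (∑ j ∈ s, c j • w j) ⬝ᵥ (∑ j ∈ s, c j • w j) ≤ ∑ j ∈ s, c j * (w j ⬝ᵥ w j) := by
  have hq : ∀ j, (0:ℝ) ≤ w j ⬝ᵥ w j := fun j => Finset.sum_nonneg fun i _ => mul_self_nonneg _
  have cross : ∀ j l, w j ⬝ᵥ w l ≤ ((w j ⬝ᵥ w j) + (w l ⬝ᵥ w l)) / 2 := by
    intro j l
    have h0 : (0:ℝ) ≤ (w j - w l) ⬝ᵥ (w j - w l) :=
      Finset.sum_nonneg fun i _ => mul_self_nonneg _
    have hexp : (w j - w l) ⬝ᵥ (w j - w l)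
        = w j ⬝ᵥ w j - 2 * (w j ⬝ᵥ w l) + w l ⬝ᵥ w l := by
      rw [sub_dotProduct, dotProduct_sub, dotProduct_sub, dotProduct_comm (w l) (w j)]
      ring
    rw [hexp] at h0; linarith
  calc (∑ j ∈ s, c j • w j) ⬝ᵥ (∑ j ∈ s, c j • w j)
      = ∑ j ∈ s, ∑ l ∈ s, (c j * c l) * (w j ⬝ᵥ w l) := by
        rw [sum_dot]
        refine Finset.sum_congr rfl fun j hj => ?_
        rw [smul_dotProduct, dot_sum, smul_eq_mul, Finset.mul_sum]
        exact Finset.sum_congr rfl fun l hl => by rw [dotProduct_smul, smul_eq_mul]; ring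
    _ ≤ ∑ j ∈ s, ∑ l ∈ s, (c j * c l) * (((w j ⬝ᵥ w j) + (w l ⬝ᵥ w l)) / 2) := by
        refine Finset.sum_le_sum fun j hj => Finset.sum_le_sum fun l hl => ?_
        exact mul_le_mul_of_nonneg_left (cross j l) (mul_nonneg (hc j hj) (hc l hl))
    _ = (∑ j ∈ s, c j) * (∑ j ∈ s, c j * (w j ⬝ᵥ w j)) := by
        have A1 : ∑ j ∈ s, ∑ l ∈ s, (c j * c l) * (w j ⬝ᵥ w j)
            = (∑ j ∈ s, c j * (w j ⬝ᵥ w j)) * (∑ j ∈ s, c j) := by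
          rw [Finset.sum_mul]
          refine Finset.sum_congr rfl fun j hj => ?_
          rw [Finset.mul_sum]
          exact Finset.sum_congr rfl fun l hl => by ring
        have A2 : ∑ j ∈ s, ∑ l ∈ s, (c j * c l) * (w l ⬝ᵥ w l)
            = (∑ j ∈ s, c j) * (∑ j ∈ s, c j * (w j ⬝ᵥ w j)) := by
          rw [Finset.sum_mul_sum]
          exact Finset.sum_congr rfl fun j hj => Finset.sum_congr rfl fun l hl => by ring
        have e : ∀ j l : ι, (c j * c l) * (((w j ⬝ᵥ w j) + (w l ⬝ᵥ w l)) / 2)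
            = ((c j * c l) * (w j ⬝ᵥ w j)) / 2 + ((c j * c l) * (w l ⬝ᵥ w l)) / 2 :=
          fun j l => by ring
        simp_rw [e, Finset.sum_add_distrib, ← Finset.sum_div]
        rw [A1, A2]
        ring
    _ ≤ 1 * (∑ j ∈ s, c j * (w j ⬝ᵥ w j)) :=
        mul_le_mul_of_nonneg_right h1
          (Finset.sum_nonneg fun j hj => mul_nonneg (hc j hj) (hq j))
    _ = _ := one_mul _

lemma mat_jensen {M : Matrix nn nn ℝ} (hM : M.PosSemidef) (s : Finset ι) (c : ι → ℝ)
    (hc : ∀ j ∈ s, 0 ≤ c j) (h1 : ∑ j ∈ s, c j ≤ 1) (v : ι → nn → ℝ) :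
    (∑ j ∈ s, c j • v j) ⬝ᵥ (M *ᵥ (∑ j ∈ s, c j • v j))
      ≤ ∑ j ∈ s, c j * (v j ⬝ᵥ (M *ᵥ v j)) := by
  obtain ⟨L, hL⟩ : ∃ L : Matrix nn nn ℝ, M = Lᴴ * L := by
    open scoped MatrixOrder in
    exact CStarAlgebra.nonneg_iff_eq_star_mul_self.mp hM.nonneg
  rw [Matrix.conjTranspose_eq_transpose_of_trivial] at hL
  subst hL
  have key : ∀ x : nn → ℝ, x ⬝ᵥ ((Lᵀ * L) *ᵥ x) = (L *ᵥ x) ⬝ᵥ (L *ᵥ x) := by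
    intro x
    rw [← Matrix.mulVec_mulVec]
    exact (mulVec_dot L x (L *ᵥ x)).symm
  rw [key]
  simp_rw [key]
  have hLsum : L *ᵥ (∑ j ∈ s, c j • v j) = ∑ j ∈ s, c j • (L *ᵥ v j) := by
    rw [mulVec_sum]
    exact Finset.sum_congr rfl fun j _ => Matrix.mulVec_smul L (c j) (v j)
  rw [hLsum]
  exact dot_jensen s c hc h1 fun j => L *ᵥ v j

end RCTB


/-- Telescoping bound on the relaxed cost, from the end of the proof of Theorem 2 of
the paper: with the virtual states initialized at `x_{0,i} = x_0/N`, the auxiliary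
cost `Ĵ_M = Σ_i (Σ_{k=0}^M x_{k,i}ᵀ (N Q_k) x_{k,i} + Σ_{k=0}^{M−1} u_{k,i}ᵀ R_{k,i} u_{k,i})`
satisfies `Ĵ_M ≤ Σ_i x_{0,i}ᵀ P̆_{0,i} x_{0,i} = (1/N²) Σ_i x_0ᵀ P̆_{0,i} x_0`. -/
theorem relaxed_cost_telescoping_bound {n N : ℕ} (hN : 0 < N) (m : Fin N → ℕ)
    (nbr : Fin N → Finset (Fin N)) (hself : ∀ i, i ∈ nbr i)
    (ω : Fin N → Fin N → ℝ)
    (hω : ∀ i, ∀ j ∈ nbr i, 0 < ω i j ∧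
      ω i j ≤ 1 / ((Finset.univ.filter (fun l => j ∈ nbr l)).card : ℝ))
    (M : ℕ)
    (A : ℕ → Matrix (Fin n) (Fin n) ℝ)
    (B : ∀ _ : ℕ, ∀ i : Fin N, Matrix (Fin n) (Fin (m i)) ℝ)
    (Q : ℕ → Matrix (Fin n) (Fin n) ℝ) (hQ : ∀ k, (Q k).PosDef)
    (R : ∀ _ : ℕ, ∀ i : Fin N, Matrix (Fin (m i)) (Fin (m i)) ℝ)
    (hR : ∀ k i, (R k i).PosDef)
    (Pbar Pm Pbrv : ℕ → Fin N → Matrix (Fin n) (Fin n) ℝ)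
    (hPbrvM : ∀ i, Pbrv M i = (N : ℝ) • Q M)
    (hPbar : ∀ k < M, ∀ i,
      Pbar (k+1) i = ((Pbrv (k+1) i)⁻¹ + B k i * (R k i)⁻¹ * (B k i)ᵀ)⁻¹)
    (hPm : ∀ k < M, ∀ i, Pm (k+1) i = (∑ j ∈ nbr i, ω i j • (Pbar (k+1) j)⁻¹)⁻¹)
    (hPbrv : ∀ k < M, ∀ i, Pbrv k i = (A k)ᵀ * Pm (k+1) i * A k + (N : ℝ) • Q k)
    (xv : ℕ → Fin N → Fin n → ℝ)
    (u : ∀ _ : ℕ, ∀ i : Fin N, Fin (m i) → ℝ)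
    (hxv : ∀ k < M, ∀ i, xv (k+1) i =
      (∑ j ∈ Finset.univ.filter (fun j => i ∈ nbr j),
        ω j i • ((Pbar (k+1) i)⁻¹ *ᵥ (Pm (k+1) j *ᵥ (A k *ᵥ xv k j))))
      + B k i *ᵥ u k i)
    (hu : ∀ k < M, ∀ i, u k i =
      (-((R k i + (B k i)ᵀ * Pbrv (k+1) i * B k i)⁻¹ * ((B k i)ᵀ * Pbrv (k+1) i))) *ᵥ
      (∑ j ∈ Finset.univ.filter (fun j => i ∈ nbr j),
        ω j i • ((Pbar (k+1) i)⁻¹ *ᵥ (Pm (k+1) j *ᵥ (A k *ᵥ xv k j)))))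
    (x0 : Fin n → ℝ) (hxv0 : ∀ i, xv 0 i = (N : ℝ)⁻¹ • x0) :
    (∑ i, (∑ k ∈ Finset.range (M+1), xv k i ⬝ᵥ (((N : ℝ) • Q k) *ᵥ xv k i)
        + ∑ k ∈ Finset.range M, u k i ⬝ᵥ (R k i *ᵥ u k i)))
      ≤ ∑ i, xv 0 i ⬝ᵥ (Pbrv 0 i *ᵥ xv 0 i) ∧
    (∑ i, xv 0 i ⬝ᵥ (Pbrv 0 i *ᵥ xv 0 i))
      = (1 / (N : ℝ) ^ 2) * ∑ i, x0 ⬝ᵥ (Pbrv 0 i *ᵥ x0) := by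
  have hNR : (0:ℝ) < (N:ℝ) := Nat.cast_pos.mpr hN
  have hQN : ∀ k, (((N:ℝ) • Q k)).PosDef := fun k => RCTB.smul_posDef (hQ k) hNR
  have hBarPD : ∀ k < M, (∀ i', (Pbrv (k+1) i').PosDef) → ∀ i, (Pbar (k+1) i).PosDef := by
    intro k hk h i
    rw [hPbar k hk i]
    have h2 : (B k i * (R k i)⁻¹ * (B k i)ᵀ).PosSemidef := by
      have := RCTB.transpose_psd_conj (hR k i).inv.posSemidef (B k i)ᵀ
      rwa [Matrix.transpose_transpose] at this
    exact ((h i).inv.add_posSemidef h2).inv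
  have hPmPD : ∀ k < M, (∀ i', (Pbar (k+1) i').PosDef) → ∀ i, (Pm (k+1) i).PosDef := by
    intro k hk h i
    rw [hPm k hk i]
    exact (RCTB.sum_posDef ⟨i, hself i⟩ fun j hj =>
      RCTB.smul_posDef (h j).inv (hω i j hj).1).inv
  have hPbrvStep : ∀ j k, k + j = M → ∀ i, (Pbrv k i).PosDef := by
    intro j
    induction j with
    | zero =>
      intro k hk i
      have hkM : k = M := by omega
      rw [hkM, hPbrvM i]; exact hQN M
    | succ j ih =>
      intro k hk i
      have hkM : k < M := by omega
      rw [hPbrv k hkM i]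
      have hp : (Pm (k+1) i).PosDef :=
        hPmPD k hkM (hBarPD k hkM (ih (k+1) (by omega))) i
      exact Matrix.PosDef.posSemidef_add (RCTB.transpose_psd_conj hp.posSemidef (A k)) (hQN k)
  have hPbrvAll : ∀ k, k ≤ M → ∀ i, (Pbrv k i).PosDef := fun k hk i =>
    hPbrvStep (M - k) k (by omega) i
  have hPbarAll : ∀ k, k < M → ∀ i, (Pbar (k+1) i).PosDef := fun k hk =>
    hBarPD k hk (hPbrvAll (k+1) hk)
  have hPmAll : ∀ k, k < M → ∀ i, (Pm (k+1) i).PosDef := fun k hk =>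
    hPmPD k hk (hPbarAll k hk)
  -- per-step inequality
  have step : ∀ k, k < M →
      (∑ i, xv k i ⬝ᵥ (((N:ℝ) • Q k) *ᵥ xv k i)) + (∑ i, u k i ⬝ᵥ (R k i *ᵥ u k i))
        + (∑ i, xv (k+1) i ⬝ᵥ (Pbrv (k+1) i *ᵥ xv (k+1) i))
      ≤ ∑ i, xv k i ⬝ᵥ (Pbrv k i *ᵥ xv k i) := by
    intro k hk
    set v : Fin N → Fin n → ℝ := fun j => Pm (k+1) j *ᵥ (A k *ᵥ xv k j) with hv
    set w : Fin N → Fin n → ℝ :=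
      fun i => ∑ j ∈ Finset.univ.filter (fun j => i ∈ nbr j), ω j i • v j with hw
    have claim1 : ∀ i, u k i ⬝ᵥ (R k i *ᵥ u k i)
          + xv (k+1) i ⬝ᵥ (Pbrv (k+1) i *ᵥ xv (k+1) i)
        = w i ⬝ᵥ ((Pbar (k+1) i)⁻¹ *ᵥ w i) := by
      intro i
      have hPd : (Pbrv (k+1) i).PosDef := hPbrvAll (k+1) hk i
      have hRd : (R k i).PosDef := hR k i
      have hWpd : (R k i + (B k i)ᵀ * Pbrv (k+1) i * (B k i)).PosDef :=
        hRd.add_posSemidef (RCTB.transpose_psd_conj hPd.posSemidef (B k i))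
      set T := (R k i + (B k i)ᵀ * Pbrv (k+1) i * (B k i))⁻¹ with hT
      have hTW : T * (R k i + (B k i)ᵀ * Pbrv (k+1) i * (B k i)) = 1 :=
        Matrix.nonsing_inv_mul _ (isUnit_iff_ne_zero.mpr hWpd.det_pos.ne')
      have hTt : Tᵀ = T := by
        rw [hT, Matrix.transpose_nonsing_inv, RCTB.symT hWpd.isHermitian]
      have hPt : (Pbrv (k+1) i)ᵀ = Pbrv (k+1) i := RCTB.symT hPd.isHermitian
      have hz : (∑ j ∈ Finset.univ.filter (fun j => i ∈ nbr j),
            ω j i • ((Pbar (k+1) i)⁻¹ *ᵥ (Pm (k+1) j *ᵥ (A k *ᵥ xv k j))))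
          = (Pbar (k+1) i)⁻¹ *ᵥ w i := by
        simp only [hw, hv, RCTB.mulVec_sum]
        exact Finset.sum_congr rfl fun j _ => (Matrix.mulVec_smul _ _ _).symm
      have hu' : u k i = (-(T * ((B k i)ᵀ * Pbrv (k+1) i))) *ᵥ ((Pbar (k+1) i)⁻¹ *ᵥ w i) := by
        rw [hu k hk i, hz, ← hT]
      have hx' : xv (k+1) i
          = (1 + B k i * (-(T * ((B k i)ᵀ * Pbrv (k+1) i)))) *ᵥ ((Pbar (k+1) i)⁻¹ *ᵥ w i) := by
        rw [hxv k hk i, hz, hu', Matrix.mulVec_mulVec, Matrix.add_mulVec, Matrix.one_mulVec,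
          Matrix.mulVec_mulVec]
      rw [hu', hx', RCTB.quad_conj, RCTB.quad_conj, RCTB.quad_conj, RCTB.quad_conj,
        ← dotProduct_add, ← Matrix.add_mulVec]
      have hmatid : ((-(T * ((B k i)ᵀ * Pbrv (k+1) i)))ᵀ * R k i
              * (-(T * ((B k i)ᵀ * Pbrv (k+1) i))))
            + ((1 + B k i * (-(T * ((B k i)ᵀ * Pbrv (k+1) i))))ᵀ * Pbrv (k+1) i
              * (1 + B k i * (-(T * ((B k i)ᵀ * Pbrv (k+1) i)))))
          = Pbar (k+1) i := by
        rw [hPbar k hk i, RCTB.woodbury hPd hRd (B k i), ← hT]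
        simp only [Matrix.transpose_add, Matrix.transpose_one, Matrix.transpose_mul,
          Matrix.transpose_neg, Matrix.transpose_transpose, hTt, hPt]
        rw [add_comm]
        nth_rewrite 1 [show R k i
            = (R k i + (B k i)ᵀ * Pbrv (k+1) i * (B k i)) - (B k i)ᵀ * Pbrv (k+1) i * (B k i)
          from (add_sub_cancel_right _ _).symm]
        exact RCTB.cos_alg (B k i) hTW
      have hBarPd := hPbarAll k hk i
      have hred : ((Pbar (k+1) i)⁻¹)ᵀ * Pbar (k+1) i * (Pbar (k+1) i)⁻¹
          = (Pbar (k+1) i)⁻¹ := by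
        rw [Matrix.transpose_nonsing_inv, RCTB.symT hBarPd.isHermitian,
          Matrix.nonsing_inv_mul _ (isUnit_iff_ne_zero.mpr hBarPd.det_pos.ne'),
          Matrix.one_mul]
      rw [← Matrix.add_mul, ← Matrix.mul_add, hmatid, hred]
    have wsum : ∀ i : Fin N, ∑ j ∈ Finset.univ.filter (fun j => i ∈ nbr j), ω j i ≤ 1 := by
      intro i
      have hmem : i ∈ Finset.univ.filter (fun j : Fin N => i ∈ nbr j) := by
        simp [hself i]
      have hcard : 0 < (Finset.univ.filter (fun j : Fin N => i ∈ nbr j)).card :=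
        Finset.card_pos.mpr ⟨i, hmem⟩
      calc ∑ j ∈ Finset.univ.filter (fun j : Fin N => i ∈ nbr j), ω j i
          ≤ (Finset.univ.filter (fun j : Fin N => i ∈ nbr j)).card
              • (1 / ((Finset.univ.filter (fun j : Fin N => i ∈ nbr j)).card : ℝ)) :=
            Finset.sum_le_card_nsmul _ _ _
              (fun j hj => (hω j i (Finset.mem_filter.mp hj).2).2)
        _ = 1 := by
            rw [nsmul_eq_mul]
            field_simp
    have claim2 : ∀ i : Fin N, w i ⬝ᵥ ((Pbar (k+1) i)⁻¹ *ᵥ w i)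
        ≤ ∑ j ∈ Finset.univ.filter (fun j => i ∈ nbr j),
            ω j i * (v j ⬝ᵥ ((Pbar (k+1) i)⁻¹ *ᵥ v j)) := by
      intro i
      simp only [hw]
      exact RCTB.mat_jensen (hPbarAll k hk i).inv.posSemidef _ _
        (fun j hj => ((hω j i (Finset.mem_filter.mp hj).2).1).le) (wsum i) v
    have claim3 : ∑ i, ∑ j ∈ Finset.univ.filter (fun j => i ∈ nbr j),
          ω j i * (v j ⬝ᵥ ((Pbar (k+1) i)⁻¹ *ᵥ v j))
        = ∑ j, ∑ i ∈ nbr j, ω j i * (v j ⬝ᵥ ((Pbar (k+1) i)⁻¹ *ᵥ v j)) := by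
      simp_rw [Finset.sum_filter]
      rw [Finset.sum_comm]
      refine Finset.sum_congr rfl fun j _ => ?_
      rw [← Finset.sum_filter, Finset.filter_univ_mem]
    have claim4 : ∀ j : Fin N, ∑ i ∈ nbr j, ω j i * (v j ⬝ᵥ ((Pbar (k+1) i)⁻¹ *ᵥ v j))
        = v j ⬝ᵥ ((Pm (k+1) j)⁻¹ *ᵥ v j) := by
      intro j
      have hsumPD : (∑ l ∈ nbr j, ω j l • (Pbar (k+1) l)⁻¹).PosDef :=
        RCTB.sum_posDef ⟨j, hself j⟩ fun l hl =>
          RCTB.smul_posDef (hPbarAll k hk l).inv (hω j l hl).1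
      have hPmInv : (Pm (k+1) j)⁻¹ = ∑ l ∈ nbr j, ω j l • (Pbar (k+1) l)⁻¹ := by
        rw [hPm k hk j,
          Matrix.nonsing_inv_nonsing_inv _ (isUnit_iff_ne_zero.mpr hsumPD.det_pos.ne')]
      rw [hPmInv, RCTB.sum_mulVec', RCTB.dot_sum]
      exact Finset.sum_congr rfl fun l hl => by
        rw [Matrix.smul_mulVec, dotProduct_smul, smul_eq_mul]
    have claim5 : ∀ j : Fin N, v j ⬝ᵥ ((Pm (k+1) j)⁻¹ *ᵥ v j)
        = xv k j ⬝ᵥ (Pbrv k j *ᵥ xv k j) - xv k j ⬝ᵥ (((N:ℝ) • Q k) *ᵥ xv k j) := by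
      intro j
      have hPmPd := hPmAll k hk j
      have hdet := isUnit_iff_ne_zero.mpr hPmPd.det_pos.ne'
      have hv' : v j = (Pm (k+1) j * A k) *ᵥ xv k j := by
        simp only [hv, Matrix.mulVec_mulVec]
      rw [hv', RCTB.quad_conj]
      have hident : (Pm (k+1) j * A k)ᵀ * (Pm (k+1) j)⁻¹ * (Pm (k+1) j * A k)
          = (A k)ᵀ * Pm (k+1) j * A k := by
        rw [Matrix.transpose_mul, RCTB.symT hPmPd.isHermitian, Matrix.mul_assoc,
          Matrix.mul_assoc, ← Matrix.mul_assoc (Pm (k+1) j)⁻¹,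
          Matrix.nonsing_inv_mul _ hdet, Matrix.one_mul, ← Matrix.mul_assoc]
      rw [hident, hPbrv k hk j, Matrix.add_mulVec, dotProduct_add]
      ring
    calc (∑ i, xv k i ⬝ᵥ (((N:ℝ) • Q k) *ᵥ xv k i)) + (∑ i, u k i ⬝ᵥ (R k i *ᵥ u k i))
          + (∑ i, xv (k+1) i ⬝ᵥ (Pbrv (k+1) i *ᵥ xv (k+1) i))
        = (∑ i, xv k i ⬝ᵥ (((N:ℝ) • Q k) *ᵥ xv k i))
          + ∑ i, w i ⬝ᵥ ((Pbar (k+1) i)⁻¹ *ᵥ w i) := by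
          rw [add_assoc, ← Finset.sum_add_distrib]
          congr 1
          exact Finset.sum_congr rfl fun i _ => claim1 i
      _ ≤ (∑ i, xv k i ⬝ᵥ (((N:ℝ) • Q k) *ᵥ xv k i))
          + ∑ i, ∑ j ∈ Finset.univ.filter (fun j => i ∈ nbr j),
              ω j i * (v j ⬝ᵥ ((Pbar (k+1) i)⁻¹ *ᵥ v j)) :=
          add_le_add_right (Finset.sum_le_sum fun i _ => claim2 i) _
      _ = (∑ i, xv k i ⬝ᵥ (((N:ℝ) • Q k) *ᵥ xv k i))
          + ∑ j, (xv k j ⬝ᵥ (Pbrv k j *ᵥ xv k j) - xv k j ⬝ᵥ (((N:ℝ) • Q k) *ᵥ xv k j)) := by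
          rw [claim3]
          congr 1
          exact Finset.sum_congr rfl fun j _ => (claim4 j).trans (claim5 j)
      _ = ∑ i, xv k i ⬝ᵥ (Pbrv k i *ᵥ xv k i) := by
          rw [Finset.sum_sub_distrib]
          ring
  -- telescoping
  have tele : ∀ k, k ≤ M →
      (∑ t ∈ Finset.range k, ((∑ i, xv t i ⬝ᵥ (((N:ℝ) • Q t) *ᵥ xv t i))
        + (∑ i, u t i ⬝ᵥ (R t i *ᵥ u t i))))
      + (∑ i, xv k i ⬝ᵥ (Pbrv k i *ᵥ xv k i))
      ≤ ∑ i, xv 0 i ⬝ᵥ (Pbrv 0 i *ᵥ xv 0 i) := by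
    intro k
    induction k with
    | zero => intro _; simp
    | succ k ih =>
      intro hk
      have hkM : k < M := hk
      have h1 := ih hkM.le
      have h2 := step k hkM
      rw [Finset.sum_range_succ]
      linarith
  constructor
  · have hfin := tele M le_rfl
    have c1 : ∑ i, ∑ k ∈ Finset.range (M+1), xv k i ⬝ᵥ (((N:ℝ) • Q k) *ᵥ xv k i)
        = ∑ k ∈ Finset.range (M+1), ∑ i, xv k i ⬝ᵥ (((N:ℝ) • Q k) *ᵥ xv k i) :=
      Finset.sum_comm
    have c2 : ∑ i, ∑ k ∈ Finset.range M, u k i ⬝ᵥ (R k i *ᵥ u k i)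
        = ∑ k ∈ Finset.range M, ∑ i, u k i ⬝ᵥ (R k i *ᵥ u k i) :=
      Finset.sum_comm
    have hlhs : (∑ i, (∑ k ∈ Finset.range (M+1), xv k i ⬝ᵥ (((N : ℝ) • Q k) *ᵥ xv k i)
          + ∑ k ∈ Finset.range M, u k i ⬝ᵥ (R k i *ᵥ u k i)))
        = (∑ t ∈ Finset.range M, ((∑ i, xv t i ⬝ᵥ (((N:ℝ) • Q t) *ᵥ xv t i))
            + (∑ i, u t i ⬝ᵥ (R t i *ᵥ u t i))))
          + (∑ i, xv M i ⬝ᵥ (Pbrv M i *ᵥ xv M i)) := by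
      simp only [hPbrvM]
      rw [Finset.sum_add_distrib, c1, c2, Finset.sum_range_succ, Finset.sum_add_distrib]
      ring
    rw [hlhs]
    exact hfin
  · rw [Finset.mul_sum]
    refine Finset.sum_congr rfl fun i _ => ?_
    rw [hxv0 i, Matrix.mulVec_smul, dotProduct_smul, smul_dotProduct, smul_eq_mul, smul_eq_mul]
    ring
end

section
/- Consider the time-invariant setting (A_k = A invertible, B_{k,i} = B_i, Q_k = Q ≻ 0, R_{k,i} = R_i ≻ 0) with the communication setup on a strongly connected directed graph, the boundedness assumption, and the joint controllability assumption, and let P̆_i, P_i, P̄_i be the steady-state matrices satisfying P̆_i = A^T P_i A + N Q, P_i = ( Σ_{j∈𝒩_i} ω_ij ( P̆_j^{-1} + B_j R_j^{-1} B_j^T ) )^{-1}, P̄_i = ( P̆_i^{-1} + B_i R_i^{-1} B_i^T )^{-1}. Suppose the multi-input system x_{k+1} = A x_k + Σ_{i=1}^N B_i u_{k,i} is driven by the stationary distributed controller: each agent i runs the virtual system x_{k+1,i} = Σ_{j∈𝒩̄_i} ω_ji P̄_i^{-1} P_j A x_{k,j} + B_i u_{k,i} with x_{0,i} = x_0/N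 and applies u_{k,i} = K_i Σ_{j∈𝒩̄_i} ω_ji P̄_i^{-1} P_j A x_{k,j} with K_i = −(R_i + B_i^T P̆_i B_i)^{-1} B_i^T P̆_i. Then the infinite-horizon cost J_∞ = Σ_{k=0}^∞ ( x_k^T Q x_k + Σ_{i=1}^N u_{k,i}^T R_i u_{k,i} ) satisfies J_∞ ≤ (1/N^2) Σ_{i=1}^N x_0^T P̆_i x_0. -/
open Matrix Finset Filter

section ThmAux

variable {n : ℕ}

private lemma aux_dot_sum {ι : Type*} (s : Finset ι) (v : Fin n → ℝ) (f : ι → Fin n → ℝ) :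
    v ⬝ᵥ (∑ j ∈ s, f j) = ∑ j ∈ s, v ⬝ᵥ f j := by
  induction s using Finset.cons_induction with
  | empty => simp
  | cons a s ha ih => simp [Finset.sum_cons, dotProduct_add, ih]

private lemma aux_sum_dot {ι : Type*} (s : Finset ι) (v : Fin n → ℝ) (f : ι → Fin n → ℝ) :
    (∑ j ∈ s, f j) ⬝ᵥ v = ∑ j ∈ s, f j ⬝ᵥ v := by
  induction s using Finset.cons_induction with
  | empty => simp
  | cons a s ha ih => simp [Finset.sum_cons, add_dotProduct, ih]

private lemma aux_mulVec_sum {ι : Type*} (s : Finset ι) (M : Matrix (Fin n) (Fin n) ℝ)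
    (f : ι → Fin n → ℝ) : M *ᵥ (∑ j ∈ s, f j) = ∑ j ∈ s, M *ᵥ f j := by
  induction s using Finset.cons_induction with
  | empty => simp
  | cons a s ha ih => simp [Finset.sum_cons, Matrix.mulVec_add, ih]

private lemma aux_sum_mulVec {ι : Type*} (s : Finset ι) (f : ι → Matrix (Fin n) (Fin n) ℝ)
    (v : Fin n → ℝ) : (∑ j ∈ s, f j) *ᵥ v = ∑ j ∈ s, f j *ᵥ v := by
  induction s using Finset.cons_induction with
  | empty => simp
  | cons a s ha ih => simp [Finset.sum_cons, Matrix.add_mulVec, ih]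

private lemma aux_hermT {M : Matrix (Fin n) (Fin n) ℝ} (h : M.IsHermitian) : Mᵀ = M := by
  have h2 : Mᴴ = Mᵀ := by simp
  rw [← h2]; exact h

private lemma aux_quad_nonneg {M : Matrix (Fin n) (Fin n) ℝ} (hM : M.PosSemidef)
    (x : Fin n → ℝ) : 0 ≤ x ⬝ᵥ (M *ᵥ x) := by
  have := hM.dotProduct_mulVec_nonneg x; simpa using this

private lemma aux_quad_symm {M : Matrix (Fin n) (Fin n) ℝ} (hM : Mᵀ = M) (a b : Fin n → ℝ) :
    a ⬝ᵥ (M *ᵥ b) = b ⬝ᵥ (M *ᵥ a) := by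
  rw [Matrix.dotProduct_mulVec, ← Matrix.mulVec_transpose, hM, dotProduct_comm]

private lemma aux_quad_congr {p : ℕ} (G : Matrix (Fin n) (Fin p) ℝ)
    (M : Matrix (Fin n) (Fin n) ℝ) (a : Fin p → ℝ) :
    (G *ᵥ a) ⬝ᵥ (M *ᵥ (G *ᵥ a)) = a ⬝ᵥ ((Gᵀ * M * G) *ᵥ a) := by
  rw [Matrix.mul_assoc, ← Matrix.mulVec_mulVec]
  conv_rhs => rw [Matrix.dotProduct_mulVec, Matrix.vecMul_transpose]
  rw [Matrix.mulVec_mulVec]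

private lemma aux_two_mul_le {M : Matrix (Fin n) (Fin n) ℝ} (hM : M.PosSemidef)
    (a b : Fin n → ℝ) :
    2 * (a ⬝ᵥ (M *ᵥ b)) ≤ a ⬝ᵥ (M *ᵥ a) + b ⬝ᵥ (M *ᵥ b) := by
  have h0 := aux_quad_nonneg hM (a - b)
  have hs := aux_quad_symm (aux_hermT hM.1) a b
  simp only [Matrix.mulVec_sub, sub_dotProduct, dotProduct_sub] at h0
  linarith

private lemma aux_jensen {ι : Type*} (s : Finset ι) (α : ι → ℝ) (hα : ∀ j ∈ s, 0 ≤ α j)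
    (hs : ∑ j ∈ s, α j ≤ 1) {M : Matrix (Fin n) (Fin n) ℝ} (hM : M.PosSemidef)
    (v : ι → Fin n → ℝ) :
    (∑ j ∈ s, α j • v j) ⬝ᵥ (M *ᵥ (∑ j ∈ s, α j • v j))
      ≤ ∑ j ∈ s, α j * (v j ⬝ᵥ (M *ᵥ v j)) := by
  have hq : ∀ j, 0 ≤ v j ⬝ᵥ (M *ᵥ v j) := fun j => aux_quad_nonneg hM (v j)
  have hexp : (∑ j ∈ s, α j • v j) ⬝ᵥ (M *ᵥ (∑ j ∈ s, α j • v j))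
      = ∑ j ∈ s, ∑ l ∈ s, α j * α l * (v j ⬝ᵥ (M *ᵥ v l)) := by
    rw [aux_sum_dot]
    refine Finset.sum_congr rfl fun j hj => ?_
    rw [smul_dotProduct, smul_eq_mul, aux_mulVec_sum, aux_dot_sum, Finset.mul_sum]
    refine Finset.sum_congr rfl fun l hl => ?_
    rw [Matrix.mulVec_smul, dotProduct_smul, smul_eq_mul]; ring
  rw [hexp]
  have step1 : ∑ j ∈ s, ∑ l ∈ s, α j * α l * (v j ⬝ᵥ (M *ᵥ v l))
      ≤ ∑ j ∈ s, ∑ l ∈ s, α j * α l * ((v j ⬝ᵥ (M *ᵥ v j) + v l ⬝ᵥ (M *ᵥ v l)) / 2) := by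
    refine Finset.sum_le_sum fun j hj => Finset.sum_le_sum fun l hl => ?_
    have h2 := aux_two_mul_le hM (v j) (v l)
    nlinarith [mul_nonneg (hα j hj) (hα l hl)]
  have hswap : ∑ j ∈ s, ∑ l ∈ s, α j * α l * (v j ⬝ᵥ (M *ᵥ v j))
      = ∑ j ∈ s, ∑ l ∈ s, α j * α l * (v l ⬝ᵥ (M *ᵥ v l)) := by
    rw [Finset.sum_comm]
    exact Finset.sum_congr rfl fun j _ => Finset.sum_congr rfl fun l _ => by ring
  have step2 : ∑ j ∈ s, ∑ l ∈ s, α j * α l * ((v j ⬝ᵥ (M *ᵥ v j) + v l ⬝ᵥ (M *ᵥ v l)) / 2)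
      = (∑ j ∈ s, α j) * ∑ j ∈ s, α j * (v j ⬝ᵥ (M *ᵥ v j)) := by
    rw [Finset.sum_mul_sum]
    have : ∀ j ∈ s, ∀ l ∈ s,
        α j * α l * ((v j ⬝ᵥ (M *ᵥ v j) + v l ⬝ᵥ (M *ᵥ v l)) / 2)
          = α j * α l * (v j ⬝ᵥ (M *ᵥ v j)) / 2 + α j * α l * (v l ⬝ᵥ (M *ᵥ v l)) / 2 :=
      fun j _ l _ => by ring
    calc ∑ j ∈ s, ∑ l ∈ s, α j * α l * ((v j ⬝ᵥ (M *ᵥ v j) + v l ⬝ᵥ (M *ᵥ v l)) / 2)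
        = ∑ j ∈ s, ∑ l ∈ s, (α j * α l * (v j ⬝ᵥ (M *ᵥ v j)) / 2
            + α j * α l * (v l ⬝ᵥ (M *ᵥ v l)) / 2) :=
          Finset.sum_congr rfl fun j hj => Finset.sum_congr rfl fun l hl => this j hj l hl
      _ = ∑ j ∈ s, ∑ l ∈ s, α j * α l * (v l ⬝ᵥ (M *ᵥ v l)) := by
          simp only [Finset.sum_add_distrib]
          have := hswap
          rw [show (∑ j ∈ s, ∑ l ∈ s, α j * α l * (v j ⬝ᵥ (M *ᵥ v j)) / 2)
              = (∑ j ∈ s, ∑ l ∈ s, α j * α l * (v j ⬝ᵥ (M *ᵥ v j))) / 2 from by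
                simp [Finset.sum_div],
            show (∑ j ∈ s, ∑ l ∈ s, α j * α l * (v l ⬝ᵥ (M *ᵥ v l)) / 2)
              = (∑ j ∈ s, ∑ l ∈ s, α j * α l * (v l ⬝ᵥ (M *ᵥ v l))) / 2 from by
                simp [Finset.sum_div], this]
          ring
      _ = ∑ j ∈ s, ∑ l ∈ s, α j * (α l * (v l ⬝ᵥ (M *ᵥ v l))) :=
          Finset.sum_congr rfl fun j _ => Finset.sum_congr rfl fun l _ => by ring
  have hqsum : 0 ≤ ∑ j ∈ s, α j * (v j ⬝ᵥ (M *ᵥ v j)) :=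
    Finset.sum_nonneg fun j hj => mul_nonneg (hα j hj) (hq j)
  calc ∑ j ∈ s, ∑ l ∈ s, α j * α l * (v j ⬝ᵥ (M *ᵥ v l))
      ≤ (∑ j ∈ s, α j) * ∑ j ∈ s, α j * (v j ⬝ᵥ (M *ᵥ v j)) := step2 ▸ step1
    _ ≤ 1 * ∑ j ∈ s, α j * (v j ⬝ᵥ (M *ᵥ v j)) := by
        exact mul_le_mul_of_nonneg_right hs hqsum
    _ = _ := one_mul _

end ThmAux
section Ric
variable {n p : ℕ}

private lemma aux_riccati1 (P : Matrix (Fin n) (Fin n) ℝ) (Rm : Matrix (Fin p) (Fin p) ℝ)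
    (B : Matrix (Fin n) (Fin p) ℝ) (T : Matrix (Fin p) (Fin p) ℝ)
    (hPt : Pᵀ = P) (hTt : Tᵀ = T)
    (hTS : T * (Rm + Bᵀ * P * B) = 1) :
    (1 + B * (-(T * (Bᵀ * P))))ᵀ * P * (1 + B * (-(T * (Bᵀ * P))))
      + (-(T * (Bᵀ * P)))ᵀ * Rm * (-(T * (Bᵀ * P)))
      = P - P * B * T * (Bᵀ * P) := by
  have hKt : (-(T * (Bᵀ * P)))ᵀ = -(P * B * T) := by
    rw [Matrix.transpose_neg, Matrix.transpose_mul, Matrix.transpose_mul,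
      Matrix.transpose_transpose, hPt, hTt, Matrix.mul_assoc]
  rw [Matrix.transpose_add, Matrix.transpose_one, Matrix.transpose_mul, hKt]
  have key : T * (Bᵀ * P * B) * T + T * Rm * T = T := by
    have h1 : T * ((Rm + Bᵀ * P * B) * T) = T := by
      rw [← Matrix.mul_assoc, hTS, Matrix.one_mul]
    calc T * (Bᵀ * P * B) * T + T * Rm * T
        = T * ((Rm + Bᵀ * P * B) * T) := by
          simp only [Matrix.mul_add, Matrix.add_mul, Matrix.mul_assoc]; abel
      _ = T := h1
  have expand : (1 + (-(P * B * T)) * Bᵀ) * P * (1 + B * (-(T * (Bᵀ * P))))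
      + (-(P * B * T)) * Rm * (-(T * (Bᵀ * P)))
      = P - P * B * T * (Bᵀ * P) - P * B * T * (Bᵀ * P)
        + (P * B * ((T * (Bᵀ * P * B) * T + T * Rm * T) * (Bᵀ * P))) := by
    simp only [Matrix.mul_add, Matrix.add_mul, Matrix.mul_neg, Matrix.neg_mul,
      Matrix.mul_one, Matrix.one_mul, neg_neg, Matrix.mul_sub, Matrix.sub_mul,
      sub_eq_add_neg, Matrix.mul_assoc]
    abel
  rw [expand, key]
  simp only [sub_eq_add_neg, Matrix.mul_assoc]
  abel

private lemma aux_riccati2 (P : Matrix (Fin n) (Fin n) ℝ) (Rm : Matrix (Fin p) (Fin p) ℝ)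
    (B : Matrix (Fin n) (Fin p) ℝ) (T : Matrix (Fin p) (Fin p) ℝ)
    (hPinv : P⁻¹ * P = 1) (hRinv : Rm * Rm⁻¹ = 1)
    (hST : (Rm + Bᵀ * P * B) * T = 1) :
    (P⁻¹ + B * Rm⁻¹ * Bᵀ) * (P - P * B * T * (Bᵀ * P)) = 1 := by
  have h3 : Rm⁻¹ * Rm = 1 := mul_eq_one_comm.mp hRinv
  have key : Rm⁻¹ * (Bᵀ * P * B) * T = Rm⁻¹ - T := by
    have h1 : Rm⁻¹ * ((Rm + Bᵀ * P * B) * T) = Rm⁻¹ := by rw [hST, Matrix.mul_one]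
    have h2 : Rm⁻¹ * ((Rm + Bᵀ * P * B) * T)
        = Rm⁻¹ * Rm * T + Rm⁻¹ * (Bᵀ * P * B) * T := by
      simp only [Matrix.mul_add, Matrix.add_mul, Matrix.mul_assoc]
    rw [h2, h3, Matrix.one_mul] at h1
    rw [eq_sub_iff_add_eq, add_comm]
    exact h1
  have expand : (P⁻¹ + B * Rm⁻¹ * Bᵀ) * (P - P * B * T * (Bᵀ * P))
      = (P⁻¹ * P) - (P⁻¹ * P) * (B * (T * (Bᵀ * P))) + B * (Rm⁻¹ * (Bᵀ * P))
        - B * ((Rm⁻¹ * (Bᵀ * P * B) * T) * (Bᵀ * P)) := by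
    simp only [Matrix.mul_add, Matrix.add_mul, Matrix.mul_sub, Matrix.sub_mul, Matrix.mul_neg, Matrix.neg_mul, neg_neg, Matrix.mul_one, Matrix.one_mul, sub_eq_add_neg, Matrix.mul_assoc]
    abel
  rw [expand, key, hPinv]
  simp only [Matrix.mul_add, Matrix.add_mul, Matrix.mul_sub, Matrix.sub_mul, Matrix.mul_neg, Matrix.neg_mul, neg_neg, Matrix.mul_one, Matrix.one_mul, sub_eq_add_neg, Matrix.mul_assoc]
  abel

end Ric

private lemma aux_swap {N : ℕ} {β : Type*} [AddCommMonoid β] (nbr : Fin N → Finset (Fin N))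
    (f : Fin N → Fin N → β) :
    ∑ i, ∑ j ∈ Finset.univ.filter (fun j => i ∈ nbr j), f i j
      = ∑ j, ∑ i ∈ nbr j, f i j := by
  simp only [Finset.sum_filter]
  rw [Finset.sum_comm]
  exact Finset.sum_congr rfl fun j _ => by rw [Finset.sum_ite_mem, Finset.univ_inter]

/-- Theorem 4 of the paper: in the time-invariant setting, when the multi-input
system is driven by the stationary distributed controller built from the
steady-state matrices `P̆_i, P_i, P̄_i`, the infinite-horizon cost
`J_∞ = Σ_{k=0}^∞ (x_kᵀ Q x_k + Σ_i u_{k,i}ᵀ R_i u_{k,i})` is finite and satisfies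
`J_∞ ≤ (1/N²) Σ_i x_0ᵀ P̆_i x_0`. -/
theorem infinite_horizon_cost_bound {n N : ℕ} (hN : 0 < N) (m : Fin N → ℕ)
    (nbr : Fin N → Finset (Fin N)) (hself : ∀ i, i ∈ nbr i)
    (hconn : ∀ i j : Fin N, ∃ l : ℕ, 0 < l ∧
      0 < (((Matrix.of fun a b => if b ∈ nbr a then (1 : ℝ) else 0) :
        Matrix (Fin N) (Fin N) ℝ) ^ l) i j)
    (ω : Fin N → Fin N → ℝ)
    (hω : ∀ i, ∀ j ∈ nbr i, 0 < ω i j ∧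
      ω i j ≤ 1 / ((Finset.univ.filter (fun l => j ∈ nbr l)).card : ℝ))
    (A : Matrix (Fin n) (Fin n) ℝ) (hA : IsUnit A.det)
    (B : ∀ i : Fin N, Matrix (Fin n) (Fin (m i)) ℝ)
    (Q : Matrix (Fin n) (Fin n) ℝ) (hQ : Q.PosDef)
    (R : ∀ i : Fin N, Matrix (Fin (m i)) (Fin (m i)) ℝ) (hR : ∀ i, (R i).PosDef)
    (η : ℝ) (hη : 0 < η) (L : ℕ) (hL : 0 < L)
    (hJC : ((∑ h ∈ Finset.range L,
        A ^ h * (∑ i, B i * (R i)⁻¹ * (B i)ᵀ) * (A ^ h)ᵀ)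
      - η • (1 : Matrix (Fin n) (Fin n) ℝ)).PosSemidef)
    (Pbrv Pm Pbar : Fin N → Matrix (Fin n) (Fin n) ℝ)
    (hPD : ∀ i, (Pbrv i).PosDef ∧ (Pm i).PosDef ∧ (Pbar i).PosDef)
    (hfp1 : ∀ i, Pbrv i = Aᵀ * Pm i * A + (N : ℝ) • Q)
    (hfp2 : ∀ i, Pm i =
      (∑ j ∈ nbr i, ω i j • ((Pbrv j)⁻¹ + B j * (R j)⁻¹ * (B j)ᵀ))⁻¹)
    (hfp3 : ∀ i, Pbar i = ((Pbrv i)⁻¹ + B i * (R i)⁻¹ * (B i)ᵀ)⁻¹)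
    (x : ℕ → Fin n → ℝ) (xv : ℕ → Fin N → Fin n → ℝ)
    (u : ∀ _ : ℕ, ∀ i : Fin N, Fin (m i) → ℝ)
    (hx : ∀ k, x (k+1) = A *ᵥ x k + ∑ i, B i *ᵥ u k i)
    (hxv0 : ∀ i, xv 0 i = (N : ℝ)⁻¹ • x 0)
    (hxv : ∀ k i, xv (k+1) i =
      (∑ j ∈ Finset.univ.filter (fun j => i ∈ nbr j),
        ω j i • ((Pbar i)⁻¹ *ᵥ (Pm j *ᵥ (A *ᵥ xv k j))))
      + B i *ᵥ u k i)
    (hu : ∀ k i, u k i =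
      (-((R i + (B i)ᵀ * Pbrv i * B i)⁻¹ * ((B i)ᵀ * Pbrv i))) *ᵥ
      (∑ j ∈ Finset.univ.filter (fun j => i ∈ nbr j),
        ω j i • ((Pbar i)⁻¹ *ᵥ (Pm j *ᵥ (A *ᵥ xv k j)))))
    :
    Summable (fun k => x k ⬝ᵥ (Q *ᵥ x k) + ∑ i, u k i ⬝ᵥ (R i *ᵥ u k i)) ∧
    ∑' k, (x k ⬝ᵥ (Q *ᵥ x k) + ∑ i, u k i ⬝ᵥ (R i *ᵥ u k i))
      ≤ (1 / (N : ℝ) ^ 2) * ∑ i, x 0 ⬝ᵥ (Pbrv i *ᵥ x 0) := by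
  classical
  have hNR : (0:ℝ) < N := by exact_mod_cast hN
  have hNne : (N:ℝ) ≠ 0 := ne_of_gt hNR
  -- symmetry of the steady-state matrices
  have hPbrvT : ∀ i, (Pbrv i)ᵀ = Pbrv i := fun i => aux_hermT (hPD i).1.1
  have hPmT : ∀ i, (Pm i)ᵀ = Pm i := fun i => aux_hermT (hPD i).2.1.1
  have hPbarT : ∀ i, (Pbar i)ᵀ = Pbar i := fun i => aux_hermT (hPD i).2.2.1
  have hRT : ∀ i, (R i)ᵀ = R i := fun i => aux_hermT (hR i).1
  -- determinant units
  have hdetPbrv : ∀ i, IsUnit (Pbrv i).det :=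
    fun i => isUnit_iff_ne_zero.2 (ne_of_gt (hPD i).1.det_pos)
  have hdetPm : ∀ i, IsUnit (Pm i).det :=
    fun i => isUnit_iff_ne_zero.2 (ne_of_gt (hPD i).2.1.det_pos)
  have hdetPbar : ∀ i, IsUnit (Pbar i).det :=
    fun i => isUnit_iff_ne_zero.2 (ne_of_gt (hPD i).2.2.det_pos)
  have hdetR : ∀ i, IsUnit (R i).det :=
    fun i => isUnit_iff_ne_zero.2 (ne_of_gt (hR i).det_pos)
  -- inverse of Pbar i
  have hMdet : ∀ i, IsUnit ((Pbrv i)⁻¹ + B i * (R i)⁻¹ * (B i)ᵀ).det := by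
    intro i
    have := hdetPbar i
    rw [hfp3 i] at this
    exact Matrix.isUnit_nonsing_inv_det_iff.mp this
  have hbarinv : ∀ i, (Pbar i)⁻¹ = (Pbrv i)⁻¹ + B i * (R i)⁻¹ * (B i)ᵀ := by
    intro i
    rw [hfp3 i, Matrix.nonsing_inv_nonsing_inv _ (hMdet i)]
  -- inverse of Pm j
  have hPminv : ∀ j, (Pm j)⁻¹ = ∑ i ∈ nbr j, ω j i • (Pbar i)⁻¹ := by
    intro j
    have hSdet : IsUnit (∑ i ∈ nbr j, ω j i • ((Pbrv i)⁻¹ + B i * (R i)⁻¹ * (B i)ᵀ)).det := by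
      have := hdetPm j
      rw [hfp2 j] at this
      exact Matrix.isUnit_nonsing_inv_det_iff.mp this
    rw [hfp2 j, Matrix.nonsing_inv_nonsing_inv _ hSdet]
    exact Finset.sum_congr rfl fun i _ => by rw [hbarinv i]
  -- weight bounds
  have hωnn : ∀ i j, j ∈ Finset.univ.filter (fun j => i ∈ nbr j) → 0 ≤ ω j i := by
    intro i j hj
    exact le_of_lt (hω j i (Finset.mem_filter.1 hj).2).1
  have hωsum : ∀ i, ∑ j ∈ Finset.univ.filter (fun j => i ∈ nbr j), ω j i ≤ 1 := by
    intro i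
    have hmemi : i ∈ Finset.univ.filter (fun l => i ∈ nbr l) :=
      Finset.mem_filter.2 ⟨Finset.mem_univ i, hself i⟩
    have hcard : (0:ℝ) < ((Finset.univ.filter (fun l => i ∈ nbr l)).card : ℝ) := by
      have : 0 < (Finset.univ.filter (fun l => i ∈ nbr l)).card :=
        Finset.card_pos.2 ⟨i, hmemi⟩
      exact_mod_cast this
    calc ∑ j ∈ Finset.univ.filter (fun j => i ∈ nbr j), ω j i
        ≤ ∑ _j ∈ Finset.univ.filter (fun j => i ∈ nbr j),
            1 / ((Finset.univ.filter (fun l => i ∈ nbr l)).card : ℝ) :=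
          Finset.sum_le_sum fun j hj => (hω j i (Finset.mem_filter.1 hj).2).2
      _ = ((Finset.univ.filter (fun l => i ∈ nbr l)).card : ℝ)
            * (1 / ((Finset.univ.filter (fun l => i ∈ nbr l)).card : ℝ)) := by
          rw [Finset.sum_const, nsmul_eq_mul]
      _ = 1 := mul_one_div_cancel (ne_of_gt hcard)
  -- abbreviations
  set v : ℕ → Fin N → Fin n → ℝ := fun k j => Pm j *ᵥ (A *ᵥ xv k j) with hv
  set z : ℕ → Fin N → Fin n → ℝ := fun k i =>
    ∑ j ∈ Finset.univ.filter (fun j => i ∈ nbr j), ω j i • ((Pbar i)⁻¹ *ᵥ v k j) with hzdef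
  set K : ∀ i : Fin N, Matrix (Fin (m i)) (Fin n) ℝ := fun i =>
    -((R i + (B i)ᵀ * Pbrv i * B i)⁻¹ * ((B i)ᵀ * Pbrv i)) with hK
  set V : ℕ → ℝ := fun k => ∑ i, xv k i ⬝ᵥ (Pbrv i *ᵥ xv k i) with hV
  have hxv' : ∀ k i, xv (k+1) i = z k i + B i *ᵥ u k i := by
    intro k i; simp only [hzdef, hv]; exact hxv k i
  have hu' : ∀ k i, u k i = K i *ᵥ z k i := by
    intro k i; simp only [hzdef, hv, hK]; exact hu k i
  -- x k is the sum of the virtual states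
  have hzsum : ∀ k, ∑ i, z k i = A *ᵥ ∑ j, xv k j := by
    intro k
    simp only [hzdef]
    rw [aux_swap nbr (fun i j => ω j i • ((Pbar i)⁻¹ *ᵥ v k j))]
    rw [aux_mulVec_sum]
    refine Finset.sum_congr rfl fun j _ => ?_
    have h1 : ∑ i ∈ nbr j, ω j i • ((Pbar i)⁻¹ *ᵥ v k j)
        = (∑ i ∈ nbr j, ω j i • (Pbar i)⁻¹) *ᵥ v k j := by
      rw [aux_sum_mulVec]
      exact Finset.sum_congr rfl fun i _ => (Matrix.smul_mulVec _ _ _).symm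
    rw [h1, ← hPminv j, hv]
    simp only []
    rw [Matrix.mulVec_mulVec, Matrix.nonsing_inv_mul _ (hdetPm j), Matrix.one_mulVec]
  have hxsum : ∀ k, x k = ∑ i, xv k i := by
    intro k
    induction k with
    | zero =>
      have : ∑ i, xv 0 i = (N:ℕ) • ((N:ℝ)⁻¹ • x 0) := by
        rw [Finset.sum_congr rfl fun i _ => hxv0 i, Finset.sum_const, Finset.card_univ,
          Fintype.card_fin]
      rw [this, ← Nat.cast_smul_eq_nsmul ℝ, smul_smul, mul_inv_cancel₀ hNne, one_smul]
    | succ k ih =>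
      rw [hx k, ih]
      have : ∑ i, xv (k+1) i = (∑ i, z k i) + ∑ i, B i *ᵥ u k i := by
        rw [← Finset.sum_add_distrib]
        exact Finset.sum_congr rfl fun i _ => hxv' k i
      rw [this, hzsum k]
  -- Riccati identity for each agent
  have hric : ∀ i, (1 + B i * K i)ᵀ * Pbrv i * (1 + B i * K i) + (K i)ᵀ * R i * K i
      = Pbar i := by
    intro i
    have hBPB : ((B i)ᵀ * Pbrv i * B i).PosSemidef := by
      have h := (hPD i).1.posSemidef.mul_mul_conjTranspose_same (B i)ᵀ
      have he : ((B i)ᵀ)ᴴ = B i := by simp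
      rwa [he] at h
    have hSpd : (R i + (B i)ᵀ * Pbrv i * B i).PosDef := (hR i).add_posSemidef hBPB
    have hSdet : IsUnit (R i + (B i)ᵀ * Pbrv i * B i).det :=
      isUnit_iff_ne_zero.2 (ne_of_gt hSpd.det_pos)
    have hSt : (R i + (B i)ᵀ * Pbrv i * B i)ᵀ = R i + (B i)ᵀ * Pbrv i * B i := by
      rw [Matrix.transpose_add, Matrix.transpose_mul, Matrix.transpose_mul,
        Matrix.transpose_transpose, hPbrvT i, hRT i, Matrix.mul_assoc]
    have hTt : ((R i + (B i)ᵀ * Pbrv i * B i)⁻¹)ᵀ = (R i + (B i)ᵀ * Pbrv i * B i)⁻¹ := by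
      rw [Matrix.transpose_nonsing_inv, hSt]
    have h1 := aux_riccati1 (Pbrv i) (R i) (B i) ((R i + (B i)ᵀ * Pbrv i * B i)⁻¹)
      (hPbrvT i) hTt (Matrix.nonsing_inv_mul _ hSdet)
    have h2 := aux_riccati2 (Pbrv i) (R i) (B i) ((R i + (B i)ᵀ * Pbrv i * B i)⁻¹)
      (Matrix.nonsing_inv_mul _ (hdetPbrv i)) (Matrix.mul_nonsing_inv _ (hdetR i))
      (Matrix.mul_nonsing_inv _ hSdet)
    rw [hK]
    simp only []
    rw [h1, hfp3 i, Matrix.inv_eq_right_inv h2]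
  -- per-step cost identity
  have hstep1 : ∀ k i, xv (k+1) i ⬝ᵥ (Pbrv i *ᵥ xv (k+1) i) + u k i ⬝ᵥ (R i *ᵥ u k i)
      = z k i ⬝ᵥ (Pbar i *ᵥ z k i) := by
    intro k i
    rw [hxv' k i, hu' k i]
    have hxv2 : z k i + B i *ᵥ (K i *ᵥ z k i) = (1 + B i * K i) *ᵥ z k i := by
      rw [Matrix.add_mulVec, Matrix.one_mulVec, Matrix.mulVec_mulVec]
    rw [hxv2, aux_quad_congr, aux_quad_congr, ← dotProduct_add,
      ← Matrix.add_mulVec, hric i]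
  -- z quadratic form in terms of w
  have hzw : ∀ k i, z k i
      = (Pbar i)⁻¹ *ᵥ (∑ j ∈ Finset.univ.filter (fun j => i ∈ nbr j), ω j i • v k j) := by
    intro k i
    rw [aux_mulVec_sum, hzdef]
    exact Finset.sum_congr rfl fun j _ => by rw [Matrix.mulVec_smul]
  have hPbarinvT : ∀ i, ((Pbar i)⁻¹)ᵀ = (Pbar i)⁻¹ := by
    intro i; rw [Matrix.transpose_nonsing_inv, hPbarT i]
  have hquadz : ∀ k i, z k i ⬝ᵥ (Pbar i *ᵥ z k i)
      = (∑ j ∈ Finset.univ.filter (fun j => i ∈ nbr j), ω j i • v k j) ⬝ᵥ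
        ((Pbar i)⁻¹ *ᵥ (∑ j ∈ Finset.univ.filter (fun j => i ∈ nbr j), ω j i • v k j)) := by
    intro k i
    rw [hzw k i, aux_quad_congr, hPbarinvT i,
      Matrix.nonsing_inv_mul _ (hdetPbar i), Matrix.one_mul]
  -- Jensen inequality per agent
  have hjen : ∀ k i, z k i ⬝ᵥ (Pbar i *ᵥ z k i)
      ≤ ∑ j ∈ Finset.univ.filter (fun j => i ∈ nbr j),
          ω j i * (v k j ⬝ᵥ ((Pbar i)⁻¹ *ᵥ v k j)) := by
    intro k i
    rw [hquadz k i]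
    exact aux_jensen _ (fun j => ω j i) (fun j hj => hωnn i j hj) (hωsum i)
      ((hPD i).2.2.inv.posSemidef) (v k)
  -- collapse the double sum
  have hcollapse : ∀ k, ∑ i, ∑ j ∈ Finset.univ.filter (fun j => i ∈ nbr j),
        ω j i * (v k j ⬝ᵥ ((Pbar i)⁻¹ *ᵥ v k j))
      = ∑ j, v k j ⬝ᵥ ((Pm j)⁻¹ *ᵥ v k j) := by
    intro k
    rw [aux_swap nbr (fun i j => ω j i * (v k j ⬝ᵥ ((Pbar i)⁻¹ *ᵥ v k j)))]
    refine Finset.sum_congr rfl fun j _ => ?_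
    rw [hPminv j, aux_sum_mulVec, aux_dot_sum]
    exact Finset.sum_congr rfl fun i _ => by
      rw [Matrix.smul_mulVec, dotProduct_smul, smul_eq_mul]
  -- evaluate v j ⬝ (Pm j)⁻¹ v j
  have hvq : ∀ k j, v k j ⬝ᵥ ((Pm j)⁻¹ *ᵥ v k j)
      = xv k j ⬝ᵥ (Pbrv j *ᵥ xv k j) - (N:ℝ) * (xv k j ⬝ᵥ (Q *ᵥ xv k j)) := by
    intro k j
    have h1 : v k j ⬝ᵥ ((Pm j)⁻¹ *ᵥ v k j)
        = (A *ᵥ xv k j) ⬝ᵥ (Pm j *ᵥ (A *ᵥ xv k j)) := by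
      rw [hv]
      simp only []
      rw [aux_quad_congr, hPmT j, Matrix.mul_assoc, Matrix.nonsing_inv_mul _ (hdetPm j),
        Matrix.mul_one]
    have h2 : (A *ᵥ xv k j) ⬝ᵥ (Pm j *ᵥ (A *ᵥ xv k j))
        = xv k j ⬝ᵥ ((Aᵀ * Pm j * A) *ᵥ xv k j) := aux_quad_congr A (Pm j) (xv k j)
    have h3 : Aᵀ * Pm j * A = Pbrv j - (N:ℝ) • Q := by
      rw [hfp1 j]; abel
    rw [h1, h2, h3, Matrix.sub_mulVec, dotProduct_sub, Matrix.smul_mulVec,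
      dotProduct_smul, smul_eq_mul]
  -- Jensen for the Q-term
  have hQjen : ∀ k, x k ⬝ᵥ (Q *ᵥ x k) ≤ (N:ℝ) * ∑ j, xv k j ⬝ᵥ (Q *ᵥ xv k j) := by
    intro k
    have hx_eq : x k = ∑ j, ((N:ℝ)⁻¹) • ((N:ℝ) • xv k j) := by
      rw [hxsum k]
      exact Finset.sum_congr rfl fun j _ => by
        rw [smul_smul, inv_mul_cancel₀ hNne, one_smul]
    have hj := aux_jensen Finset.univ (fun _ => (N:ℝ)⁻¹)
      (fun j _ => le_of_lt (inv_pos.2 hNR)) (by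
        rw [Finset.sum_const, nsmul_eq_mul, Finset.card_univ, Fintype.card_fin]
        rw [mul_inv_cancel₀ hNne])
      hQ.posSemidef (fun j => (N:ℝ) • xv k j)
    rw [← hx_eq] at hj
    calc x k ⬝ᵥ (Q *ᵥ x k)
        ≤ ∑ j, (N:ℝ)⁻¹ * (((N:ℝ) • xv k j) ⬝ᵥ (Q *ᵥ ((N:ℝ) • xv k j))) := hj
      _ = ∑ j, (N:ℝ) * (xv k j ⬝ᵥ (Q *ᵥ xv k j)) := by
          refine Finset.sum_congr rfl fun j _ => ?_
          rw [Matrix.mulVec_smul, dotProduct_smul, smul_dotProduct,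
            smul_eq_mul, smul_eq_mul, ← mul_assoc, inv_mul_cancel₀ hNne, one_mul]
      _ = (N:ℝ) * ∑ j, xv k j ⬝ᵥ (Q *ᵥ xv k j) := by rw [Finset.mul_sum]
  -- the Lyapunov step
  have hstep : ∀ k, (x k ⬝ᵥ (Q *ᵥ x k) + ∑ i, u k i ⬝ᵥ (R i *ᵥ u k i)) + V (k+1) ≤ V k := by
    intro k
    have e1 : V (k+1) + ∑ i, u k i ⬝ᵥ (R i *ᵥ u k i) = ∑ i, z k i ⬝ᵥ (Pbar i *ᵥ z k i) := by
      rw [hV]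
      simp only []
      rw [← Finset.sum_add_distrib]
      exact Finset.sum_congr rfl fun i _ => hstep1 k i
    have e2 : ∑ i, z k i ⬝ᵥ (Pbar i *ᵥ z k i)
        ≤ V k - (N:ℝ) * ∑ j, xv k j ⬝ᵥ (Q *ᵥ xv k j) := by
      calc ∑ i, z k i ⬝ᵥ (Pbar i *ᵥ z k i)
          ≤ ∑ i, ∑ j ∈ Finset.univ.filter (fun j => i ∈ nbr j),
              ω j i * (v k j ⬝ᵥ ((Pbar i)⁻¹ *ᵥ v k j)) :=
            Finset.sum_le_sum fun i _ => hjen k i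
        _ = ∑ j, v k j ⬝ᵥ ((Pm j)⁻¹ *ᵥ v k j) := hcollapse k
        _ = ∑ j, (xv k j ⬝ᵥ (Pbrv j *ᵥ xv k j) - (N:ℝ) * (xv k j ⬝ᵥ (Q *ᵥ xv k j))) :=
            Finset.sum_congr rfl fun j _ => hvq k j
        _ = V k - (N:ℝ) * ∑ j, xv k j ⬝ᵥ (Q *ᵥ xv k j) := by
            rw [Finset.sum_sub_distrib, ← Finset.mul_sum, hV]
    have e3 := hQjen k
    linarith
  -- nonnegativity
  have hcnn : ∀ k, 0 ≤ x k ⬝ᵥ (Q *ᵥ x k) + ∑ i, u k i ⬝ᵥ (R i *ᵥ u k i) := by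
    intro k
    have h1 := aux_quad_nonneg hQ.posSemidef (x k)
    have h2 : 0 ≤ ∑ i, u k i ⬝ᵥ (R i *ᵥ u k i) :=
      Finset.sum_nonneg fun i _ => aux_quad_nonneg (hR i).posSemidef (u k i)
    linarith
  have hVnn : ∀ k, 0 ≤ V k := by
    intro k
    exact Finset.sum_nonneg fun i _ => aux_quad_nonneg (hPD i).1.posSemidef (xv k i)
  -- telescoping bound on partial sums
  have hpartial : ∀ Kn, (∑ k ∈ Finset.range Kn,
      (x k ⬝ᵥ (Q *ᵥ x k) + ∑ i, u k i ⬝ᵥ (R i *ᵥ u k i))) + V Kn ≤ V 0 := by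
    intro Kn
    induction Kn with
    | zero => simp
    | succ Kn ih =>
      rw [Finset.sum_range_succ]
      have := hstep Kn
      linarith
  have hbound : ∀ Kn, ∑ k ∈ Finset.range Kn,
      (x k ⬝ᵥ (Q *ᵥ x k) + ∑ i, u k i ⬝ᵥ (R i *ᵥ u k i)) ≤ V 0 := by
    intro Kn
    have := hpartial Kn
    have := hVnn Kn
    linarith
  -- value of V 0
  have hV0 : V 0 = (1 / (N : ℝ) ^ 2) * ∑ i, x 0 ⬝ᵥ (Pbrv i *ᵥ x 0) := by
    rw [hV]
    simp only []
    rw [Finset.mul_sum]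
    refine Finset.sum_congr rfl fun i _ => ?_
    have hp : (1:ℝ)/(N:ℝ)^2 * (x 0 ⬝ᵥ (Pbrv i *ᵥ x 0))
        = (N:ℝ)⁻¹ * ((N:ℝ)⁻¹ * (x 0 ⬝ᵥ (Pbrv i *ᵥ x 0))) := by rw [sq]; ring
    rw [hxv0 i, Matrix.mulVec_smul, dotProduct_smul, smul_dotProduct,
      smul_eq_mul, smul_eq_mul, hp]
  rw [← hV0]
  exact ⟨summable_of_sum_range_le hcnn hbound,
    Summable.tsum_le_of_sum_range_le (summable_of_sum_range_le hcnn hbound) hbound⟩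
end
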